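/- arXiv:2509.05137 — 3 statements merged into one kernel-verified Lean document; each statement's English description precedes it below -/
import Mathlib

section
/- Let C be a class of distributions on a countable domain X, let α ≥ 1, and let V_sub be a subtractive adaptive adversary with fixed constant budget η. If there exist constants γ', ζ ∈ (0, 1/2) such that for every m ∈ ℕ the adversary V_sub successfully (4αη + 4γ', ζ)-confuses C-generated samples of size m, then there exists an adaptive additive adversary V_{add,2} (with fixed constant budget at most 2η) that is a universal α-adversary for C. -/
open scoped ENNReal NNReal

/-- Total variation distance between two discrete distributions. -/
noncomputable def tv {X : Type*} (p q : PMF X) : ℝ :=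
  (∑' x, |(p x).toReal - (q x).toReal|) / 2

/-- The distribution of an i.i.d. sample of size `m` from `p`, viewed as a multiset. -/
noncomputable def iid {X : Type*} (p : PMF X) : ℕ → PMF (Multiset X)
  | 0 => PMF.pure 0
  | n + 1 => (iid p n).bind fun s => p.map fun x => x ::ₘ s

/-- `|Q|^m` : first draw `q ∼ Q`, then an i.i.d. sample `S ∼ q^m`. -/
noncomputable def metaSample {X : Type*} (Q : PMF (PMF X)) (m : ℕ) : PMF (Multiset X) :=
  Q.bind fun q => iid q m

/-- An adaptive adversary: a randomized map from samples (finite multisets) to samples. -/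
abbrev Adversary (X : Type*) := Multiset X → PMF (Multiset X)

/-- `V(P)`: the distribution of `V S` for `S ∼ P` (including internal randomness). -/
noncomputable def advPush {X : Type*} (V : Adversary X) (P : PMF (Multiset X)) :
    PMF (Multiset X) := P.bind V

/-- An additive adversary only adds points: `S ⊆ V(S)` almost surely. -/
def IsAdditive {X : Type*} (V : Adversary X) : Prop :=
  ∀ S T, T ∈ (V S).support → S ≤ T

/-- A subtractive adversary only removes points: `V(S) ⊆ S` almost surely. -/
def IsSubtractive {X : Type*} (V : Adversary X) : Prop :=
  ∀ S T, T ∈ (V S).support → T ≤ S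

/-- Fixed constant budget `η`: `|V(S)|` depends only on `|S|` (via `c`), and for every `m`,
`η m − 1 < m·budget(V,m) ≤ η m` where `m·budget(V,m) = ||V(S)| − |S||`. -/
def FixedBudget {X : Type*} (V : Adversary X) (η : ℝ) : Prop :=
  ∃ c : ℕ → ℕ, (∀ S T, T ∈ (V S).support → Multiset.card T = c (Multiset.card S)) ∧
    ∀ m : ℕ, η * m - 1 < |(c m : ℝ) - m| ∧ |(c m : ℝ) - m| ≤ η * m

/-- Fixed constant budget `η` for an additive adversary (`m·budget(V,m) = |V(S)| − |S|`). -/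
def FixedBudgetAdd {X : Type*} (V : Adversary X) (η : ℝ) : Prop :=
  ∃ c : ℕ → ℕ, (∀ S T, T ∈ (V S).support → Multiset.card T = c (Multiset.card S)) ∧
    ∀ m : ℕ, η * m - 1 < (c m : ℝ) - m ∧ (c m : ℝ) - m ≤ η * m

/-- Fixed constant budget `η` for a subtractive adversary (`m·budget(V,m) = |S| − |V(S)|`). -/
def FixedBudgetSub {X : Type*} (V : Adversary X) (η : ℝ) : Prop :=
  ∃ c : ℕ → ℕ, (∀ S T, T ∈ (V S).support → Multiset.card T = c (Multiset.card S)) ∧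
    ∀ m : ℕ, η * m - 1 < (m : ℝ) - c m ∧ (m : ℝ) - c m ≤ η * m

/-- Probability of an event under a discrete distribution. -/
noncomputable def probEvent {β : Type*} (P : PMF β) (E : Set β) : ℝ≥0∞ :=
  P.toOuterMeasure E

/-- `A` with sample complexity `mc` learns the class `C` against adversary `V`,
up to error `bound + ε` with confidence `1 − δ` once `m ≥ mc ε δ`. -/
def RobustLearnerFor {X : Type*} (C : Set (PMF X)) (A : Multiset X → PMF X)
    (mc : ℝ → ℝ → ℕ) (V : Adversary X) (bound : ℝ) : Prop :=
  ∀ p ∈ C, ∀ ε δ : ℝ, 0 < ε → ε < 1 → 0 < δ → δ < 1 →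
    ∀ m : ℕ, mc ε δ ≤ m →
      1 - ENNReal.ofReal δ ≤
        probEvent ((iid p m).bind V) {T | tv (A T) p ≤ bound + ε}

/-- `C` is adaptively α-robustly learnable w.r.t. the single adversary `V` with budget `η`. -/
def RobustlyLearnableWrt {X : Type*} (C : Set (PMF X)) (α : ℝ)
    (V : Adversary X) (η : ℝ) : Prop :=
  ∃ A mc, RobustLearnerFor C A mc V (α * η)

/-- `V` (with budget `η`) is a universal α-adversary for `C`. -/
def UniversalAdversary {X : Type*} (C : Set (PMF X)) (α : ℝ)
    (V : Adversary X) (η : ℝ) : Prop :=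
  ¬ RobustlyLearnableWrt C α V η

/-- `C` is adaptively α-robustly learnable w.r.t. a class `𝒱` of adversaries
(each given with its budget). -/
def RobustlyLearnableWrtClass {X : Type*} (C : Set (PMF X)) (α : ℝ)
    (𝒱 : Set (Adversary X × ℝ)) : Prop :=
  ∃ A mc, ∀ Vη ∈ 𝒱, RobustLearnerFor C A mc Vη.1 (α * Vη.2)

/-- `C` is adaptively additively α-robustly learnable: one learner works simultaneously
against all additive adaptive adversaries with fixed constant budgets. -/
def AdditivelyRobustlyLearnable {X : Type*} (C : Set (PMF X)) (α : ℝ) : Prop :=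
  ∃ A mc, ∀ V : Adversary X, ∀ η : ℝ, 0 < η → η < 1 →
    IsAdditive V → FixedBudgetAdd V η → RobustLearnerFor C A mc V (α * η)

/-- `C` is adaptively subtractively α-robustly learnable. -/
def SubtractivelyRobustlyLearnable {X : Type*} (C : Set (PMF X)) (α : ℝ) : Prop :=
  ∃ A mc, ∀ V : Adversary X, ∀ η : ℝ, 0 < η → η < 1 →
    IsSubtractive V → FixedBudgetSub V η → RobustLearnerFor C A mc V (α * η)

/-- The pair `(V1, V2)` successfully `(γ,ζ)`-confuses `C`-generated samples of size `m`. -/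
def ConfusesPair {X : Type*} (C : Set (PMF X)) (V1 V2 : Adversary X)
    (γ ζ : ℝ) (m : ℕ) : Prop :=
  ∃ p ∈ C, ∃ Q : PMF (PMF X), Q.support ⊆ C ∧
    (∀ q ∈ Q.support, γ < tv p q) ∧
    tv (advPush V1 (metaSample Q m)) (advPush V2 (iid p m)) < ζ

/-- A single adversary `V` successfully `(γ,ζ)`-confuses `C`-generated samples of size `m`. -/
def Confuses {X : Type*} (C : Set (PMF X)) (V : Adversary X) (γ ζ : ℝ) (m : ℕ) : Prop :=
  ConfusesPair C V V γ ζ m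

/-- `p` is the distribution `p_{i,j,k} = (1 − 1/j)·δ_{(0,0)} + (1/j − 1/k)·U_{B_i×{2j+1}}
 + (1/k)·δ_{(i,2j+2)}` on `ℕ × ℕ`. -/
def IsPijk (B : ℕ → Finset ℕ) (i j k : ℕ) (p : PMF (ℕ × ℕ)) : Prop :=
  ∀ x : ℕ × ℕ,
    p x = (1 - ((j : ℝ≥0∞))⁻¹) * (if x = (0, 0) then 1 else 0)
      + (((j : ℝ≥0∞))⁻¹ - ((k : ℝ≥0∞))⁻¹) *
          (if x.1 ∈ B i ∧ x.2 = 2 * j + 1 then (((B i).card : ℝ≥0∞))⁻¹ else 0)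
      + ((k : ℝ≥0∞))⁻¹ * (if x = (i, 2 * j + 2) then 1 else 0)

/-- The class `C_g = {p_{i,j,g(j)} : i, j ∈ ℕ}` (for the meaningful parameters). -/
def Cg (B : ℕ → Finset ℕ) (g : ℕ → ℕ) : Set (PMF (ℕ × ℕ)) :=
  {p | ∃ i j : ℕ, 1 ≤ j ∧ j < g j ∧ (B i).Nonempty ∧ IsPijk B i j (g j) p}

/-- `g` is superlinear: `g(n)/n → ∞`. -/
def Superlinear (g : ℕ → ℕ) : Prop :=
  Filter.Tendsto (fun n => (g n : ℝ) / n) Filter.atTop Filter.atTop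

/-! ### Auxiliary machinery for the proof of Statement 11 -/

section DtvAux

/-- One-sided (ENNReal-valued) total variation discrepancy. -/
noncomputable def Dtv {β : Type*} (P Q : PMF β) : ℝ≥0∞ := ∑' b, (P b - Q b)

lemma Dtv_le_one {β : Type*} (P Q : PMF β) : Dtv P Q ≤ 1 :=
  le_of_le_of_eq (ENNReal.tsum_le_tsum fun _ => tsub_le_self) P.tsum_coe

lemma Dtv_ne_top {β : Type*} (P Q : PMF β) : Dtv P Q ≠ ∞ :=
  ((Dtv_le_one P Q).trans_lt ENNReal.one_lt_top).ne

lemma Dtv_symm {β : Type*} (P Q : PMF β) : Dtv P Q = Dtv Q P := by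
  have key : ∀ a b : ℝ≥0∞, a = (a - b) + min a b := by
    intro a b
    rcases le_total b a with h | h
    · rw [min_eq_right h, tsub_add_cancel_of_le h]
    · rw [min_eq_left h, tsub_eq_zero_of_le h, zero_add]
  have hmin : (∑' b, min (P b) (Q b)) ≠ ∞ := by
    refine ((ENNReal.tsum_le_tsum fun b => min_le_left _ _).trans_lt ?_).ne
    rw [P.tsum_coe]; exact ENNReal.one_lt_top
  have h1 : Dtv P Q + ∑' b, min (P b) (Q b) = 1 := by
    rw [Dtv, ← ENNReal.tsum_add, ← P.tsum_coe]
    exact (tsum_congr fun b => (key (P b) (Q b)).symm)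
  have h2 : Dtv Q P + ∑' b, min (P b) (Q b) = 1 := by
    rw [Dtv, ← ENNReal.tsum_add, ← Q.tsum_coe]
    refine (tsum_congr fun b => ?_)
    rw [min_comm]; exact (key (Q b) (P b)).symm
  have h3 : (∑' b, min (P b) (Q b)) + Dtv P Q = (∑' b, min (P b) (Q b)) + Dtv Q P := by
    calc (∑' b, min (P b) (Q b)) + Dtv P Q = Dtv P Q + ∑' b, min (P b) (Q b) := add_comm _ _
      _ = 1 := h1
      _ = Dtv Q P + ∑' b, min (P b) (Q b) := h2.symm
      _ = (∑' b, min (P b) (Q b)) + Dtv Q P := add_comm _ _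
  exact (ENNReal.add_right_inj hmin).mp h3

lemma abs_toReal_sub {a b : ℝ≥0∞} (ha : a ≠ ∞) (hb : b ≠ ∞) :
    |a.toReal - b.toReal| = ((a - b) + (b - a)).toReal := by
  rcases le_total a b with h | h
  · rw [tsub_eq_zero_of_le h, zero_add, abs_sub_comm,
      abs_of_nonneg (sub_nonneg.2 ((ENNReal.toReal_le_toReal ha hb).2 h)),
      ← ENNReal.toReal_sub_of_le h hb]
  · rw [tsub_eq_zero_of_le h, add_zero,
      abs_of_nonneg (sub_nonneg.2 ((ENNReal.toReal_le_toReal hb ha).2 h)),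
      ← ENNReal.toReal_sub_of_le h ha]

lemma tv_eq_Dtv {β : Type*} (P Q : PMF β) : tv P Q = (Dtv P Q).toReal := by
  have h1 : ∀ b, ((P b - Q b) + (Q b - P b)) ≠ ∞ := fun b =>
    ENNReal.add_ne_top.2 ⟨(tsub_le_self.trans_lt (P.apply_lt_top b)).ne,
      (tsub_le_self.trans_lt (Q.apply_lt_top b)).ne⟩
  rw [tv, tsum_congr fun b => abs_toReal_sub (P.apply_ne_top b) (Q.apply_ne_top b),
    ← ENNReal.tsum_toReal_eq h1, ENNReal.tsum_add]
  rw [show (∑' b, (P b - Q b)) = Dtv P Q from rfl, show (∑' b, (Q b - P b)) = Dtv Q P from rfl,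
    ← Dtv_symm P Q, ENNReal.toReal_add (Dtv_ne_top P Q) (Dtv_ne_top P Q)]
  ring

lemma tv_symm {β : Type*} (P Q : PMF β) : tv P Q = tv Q P := by
  rw [tv, tv]
  exact congrArg (· / 2) (tsum_congr fun b => abs_sub_comm _ _)

lemma tv_triangle {β : Type*} (P Q R : PMF β) : tv P R ≤ tv P Q + tv Q R := by
  rw [tv_eq_Dtv, tv_eq_Dtv, tv_eq_Dtv, ← ENNReal.toReal_add (Dtv_ne_top P Q) (Dtv_ne_top Q R)]
  exact ENNReal.toReal_mono (ENNReal.add_ne_top.2 ⟨Dtv_ne_top _ _, Dtv_ne_top _ _⟩)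
    (by rw [Dtv, Dtv, Dtv, ← ENNReal.tsum_add]
        exact ENNReal.tsum_le_tsum fun b => tsub_le_tsub_add_tsub)

lemma Dtv_triangle {β : Type*} (P Q R : PMF β) : Dtv P R ≤ Dtv P Q + Dtv Q R := by
  rw [Dtv, Dtv, Dtv, ← ENNReal.tsum_add]
  exact ENNReal.tsum_le_tsum fun b => tsub_le_tsub_add_tsub

lemma tsum_tsub_le' {β : Type*} (f g : β → ℝ≥0∞) :
    (∑' b, f b) - (∑' b, g b) ≤ ∑' b, (f b - g b) := by
  rw [tsub_le_iff_right, ← ENNReal.tsum_add]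
  exact ENNReal.tsum_le_tsum fun b => le_tsub_add

lemma mul_tsub_le'' (a b c : ℝ≥0∞) : a * b - a * c ≤ a * (b - c) := by
  rw [tsub_le_iff_right, ← mul_add]
  exact mul_le_mul_right le_tsub_add a

lemma tsub_mul_le'' (a b c : ℝ≥0∞) : a * c - b * c ≤ (a - b) * c := by
  rw [tsub_le_iff_right, ← add_mul]
  exact mul_le_mul_left le_tsub_add c

lemma Dtv_bind_le_right {β γ : Type*} (P : PMF β) (f g : β → PMF γ) (Cb : ℝ≥0∞)
    (h : ∀ b ∈ P.support, Dtv (f b) (g b) ≤ Cb) :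
    Dtv (P.bind f) (P.bind g) ≤ Cb := by
  have step1 : Dtv (P.bind f) (P.bind g) ≤ ∑' c, ∑' b, P b * ((f b c) - (g b c)) := by
    refine ENNReal.tsum_le_tsum fun c => ?_
    rw [PMF.bind_apply, PMF.bind_apply]
    exact (tsum_tsub_le' _ _).trans (ENNReal.tsum_le_tsum fun b => mul_tsub_le'' _ _ _)
  refine step1.trans ?_
  rw [ENNReal.tsum_comm]
  rw [tsum_congr fun b => (ENNReal.tsum_mul_left :
    (∑' c, P b * (f b c - g b c)) = P b * ∑' c, (f b c - g b c))]
  calc ∑' b, P b * Dtv (f b) (g b) ≤ ∑' b, P b * Cb := by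
        refine ENNReal.tsum_le_tsum fun b => ?_
        by_cases hb : P b = 0
        · simp [hb]
        · exact mul_le_mul_right (h b ((PMF.mem_support_iff P b).2 hb)) _
    _ = Cb := by rw [ENNReal.tsum_mul_right, P.tsum_coe, one_mul]

lemma Dtv_bind_le_left {β γ : Type*} (P P' : PMF β) (f : β → PMF γ) :
    Dtv (P.bind f) (P'.bind f) ≤ Dtv P P' := by
  have step1 : Dtv (P.bind f) (P'.bind f) ≤ ∑' c, ∑' b, (P b - P' b) * f b c := by
    refine ENNReal.tsum_le_tsum fun c => ?_
    rw [PMF.bind_apply, PMF.bind_apply]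
    exact (tsum_tsub_le' _ _).trans (ENNReal.tsum_le_tsum fun b => tsub_mul_le'' _ _ _)
  refine step1.trans (le_of_eq ?_)
  rw [ENNReal.tsum_comm]
  rw [tsum_congr fun b => (ENNReal.tsum_mul_left :
    (∑' c, (P b - P' b) * f b c) = (P b - P' b) * ∑' c, f b c)]
  exact tsum_congr fun b => by rw [(f b).tsum_coe, mul_one]

lemma probEvent_le_one {β : Type*} (P : PMF β) (E : Set β) : probEvent P E ≤ 1 := by
  rw [probEvent, PMF.toOuterMeasure_apply, ← P.tsum_coe]
  refine ENNReal.tsum_le_tsum fun b => ?_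
  by_cases hb : b ∈ E <;> simp [Set.indicator, hb]

lemma probEvent_compl {β : Type*} (P : PMF β) (E : Set β) :
    probEvent P E + probEvent P Eᶜ = 1 := by
  rw [probEvent, probEvent, PMF.toOuterMeasure_apply, PMF.toOuterMeasure_apply,
    ← ENNReal.tsum_add, ← P.tsum_coe]
  exact tsum_congr fun b => by by_cases hb : b ∈ E <;> simp [Set.indicator, hb]

lemma probEvent_tsub_le {β : Type*} (P Q : PMF β) (E : Set β) :
    probEvent P E - probEvent Q E ≤ Dtv P Q := by
  rw [probEvent, probEvent, PMF.toOuterMeasure_apply, PMF.toOuterMeasure_apply]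
  refine (tsum_tsub_le' _ _).trans (ENNReal.tsum_le_tsum fun b => ?_)
  by_cases hb : b ∈ E <;> simp [Set.indicator, hb]

lemma probEvent_mono {β : Type*} (P : PMF β) {E F : Set β} (h : E ⊆ F) :
    probEvent P E ≤ probEvent P F :=
  P.toOuterMeasure.mono h

lemma PMF_bind_congr {β γ : Type*} (P : PMF β) (f g : β → PMF γ)
    (h : ∀ b ∈ P.support, f b = g b) : P.bind f = P.bind g := by
  apply PMF.ext; intro c
  rw [PMF.bind_apply, PMF.bind_apply]
  refine tsum_congr fun b => ?_
  by_cases hb : P b = 0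
  · simp [hb]
  · rw [h b ((PMF.mem_support_iff P b).2 hb)]

end DtvAux
section Disint

/-- First marginal of a joint PMF. -/
noncomputable def margFst {β γ : Type*} (J : PMF (β × γ)) : PMF β := J.map Prod.fst

lemma margFst_apply {β γ : Type*} (J : PMF (β × γ)) (b : β) :
    margFst J b = ∑' c, J (b, c) := by
  classical
  rw [margFst, PMF.map_apply]
  rw [show (∑' (a : β × γ), if b = a.1 then J a else 0)
      = ∑' (x : β) (y : γ), if b = x then J (x, y) else 0 from
    ENNReal.tsum_prod (f := fun x y => if b = x then J (x, y) else 0)]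
  rw [tsum_eq_single b (fun b' hb' => by
    simp only [if_neg (Ne.symm hb')]
    exact tsum_zero)]
  simp

/-- Conditional kernel of a joint PMF given its first coordinate, with a default
kernel on null first coordinates. -/
noncomputable def condK {β γ : Type*} (J : PMF (β × γ)) (dflt : β → PMF γ) (b : β) : PMF γ :=
  if h : margFst J b = 0 then dflt b
  else ⟨fun c => J (b, c) * (margFst J b)⁻¹, by
    refine (Summable.hasSum_iff ENNReal.summable).2 ?_
    rw [ENNReal.tsum_mul_right, ← margFst_apply]
    exact ENNReal.mul_inv_cancel h (PMF.apply_ne_top _ _)⟩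

lemma condK_apply_of_ne {β γ : Type*} (J : PMF (β × γ)) (dflt : β → PMF γ) (b : β)
    (h : margFst J b ≠ 0) (c : γ) :
    condK J dflt b c = J (b, c) * (margFst J b)⁻¹ := by
  have := congrArg (fun P : PMF γ => P c) (dif_neg h : condK J dflt b = _); exact this.trans rfl

lemma condK_support {β γ : Type*} (J : PMF (β × γ)) (dflt : β → PMF γ) (b : β) (c : γ)
    (hc : c ∈ (condK J dflt b).support) :
    (b, c) ∈ J.support ∨ (margFst J b = 0 ∧ c ∈ (dflt b).support) := by
  by_cases h : margFst J b = 0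
  · right
    refine ⟨h, ?_⟩
    have this : condK J dflt b = dflt b := dif_pos h; rwa [this] at hc
  · left
    rw [PMF.mem_support_iff] at hc ⊢
    intro h0
    exact hc (by rw [condK_apply_of_ne J dflt b h c, h0, zero_mul])

lemma disint {β γ : Type*} (J : PMF (β × γ)) (dflt : β → PMF γ) :
    (margFst J).bind (fun b => (condK J dflt b).map (Prod.mk b)) = J := by
  apply PMF.ext
  rintro ⟨b, c⟩
  rw [PMF.bind_apply]
  rw [tsum_eq_single b (fun b' hb' => ?_)]
  · rw [PMF.map_apply]
    rw [tsum_eq_single c (fun c' hc' => ?_)]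
    · rw [if_pos rfl]
      by_cases h : margFst J b = 0
      · have hJ : J (b, c) = 0 := by
          have hle : J (b, c) ≤ margFst J b := by
            rw [margFst_apply]; exact ENNReal.le_tsum c
          exact le_antisymm (h ▸ hle) zero_le
        simp [h, hJ]
      · rw [condK_apply_of_ne J dflt b h c, mul_comm (J (b, c)) _, ← mul_assoc,
          ENNReal.mul_inv_cancel h (PMF.apply_ne_top _ _), one_mul]
    · rw [if_neg]
      intro hEq
      exact hc' ((Prod.ext_iff.1 hEq).2).symm
  · have : ((condK J dflt b').map (Prod.mk b')) (b, c) = 0 := by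
      rw [PMF.map_apply]
      refine ENNReal.tsum_eq_zero.2 fun c' => ?_
      rw [if_neg]
      intro hEq
      exact hb' (congrArg Prod.fst hEq).symm
    rw [this, mul_zero]

end Disint

section SampleCard

lemma iid_support_card {X : Type*} (p : PMF X) (n : ℕ) :
    ∀ S ∈ (iid p n).support, Multiset.card S = n := by
  induction n with
  | zero =>
    intro S hS
    rw [iid, PMF.support_pure, Set.mem_singleton_iff] at hS
    simp [hS]
  | succ n ih =>
    intro S hS
    rw [iid, PMF.mem_support_bind_iff] at hS
    obtain ⟨s, hs, hS⟩ := hS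
    rw [PMF.mem_support_map_iff] at hS
    obtain ⟨x, _, rfl⟩ := hS
    simp [ih s hs]

lemma metaSample_support_card {X : Type*} (Q : PMF (PMF X)) (m : ℕ) :
    ∀ S ∈ (metaSample Q m).support, Multiset.card S = m := by
  intro S hS
  rw [metaSample, PMF.mem_support_bind_iff] at hS
  obtain ⟨q, _, hS⟩ := hS
  exact iid_support_card q m S hS

end SampleCard
section Construction

variable {X : Type*} [DecidableEq X]

/-- Joint law of `(V S, S - V S)` for `S ∼ P`. -/
noncomputable def JointD (Vs : Adversary X) (P : PMF (Multiset X)) :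
    PMF (Multiset X × Multiset X) :=
  P.bind fun S => (Vs S).map fun T => (T, S - T)

lemma margFst_JointD (Vs : Adversary X) (P : PMF (Multiset X)) :
    margFst (JointD Vs P) = P.bind Vs := by
  rw [margFst, JointD, PMF.map_bind]
  refine PMF_bind_congr _ _ _ fun S _ => ?_
  rw [PMF.map_comp]
  exact PMF.map_id (Vs S)

lemma JointD_support (Vs : Adversary X) (hVs : IsSubtractive Vs) (P : PMF (Multiset X))
    (T D : Multiset X) (h : (T, D) ∈ (JointD Vs P).support) :
    ∃ S ∈ P.support, T ∈ (Vs S).support ∧ T ≤ S ∧ D = S - T := by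
  rw [JointD, PMF.mem_support_bind_iff] at h
  obtain ⟨S, hS, h⟩ := h
  rw [PMF.mem_support_map_iff] at h
  obtain ⟨T', hT', hEq⟩ := h
  obtain ⟨h1, h2⟩ := Prod.ext_iff.1 hEq
  subst h1
  exact ⟨S, hS, hT', hVs S T' hT', h2.symm⟩

/-- A fair coin. -/
noncomputable def coinPMF : PMF Bool :=
  PMF.bernoulli 2⁻¹ (by norm_num)

/-- Even mixture of two distributions. -/
noncomputable def mixAB {β : Type*} (A B : PMF β) : PMF β :=
  coinPMF.bind fun t => if t then A else B

/-- The additive adversary built from the subtractive one. -/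
noncomputable def VaddOf (Vs : Adversary X) (Mix : ℕ → Multiset X → PMF (Multiset X))
    (e : ℕ → ℕ) (x₀ : X) : Adversary X := fun S =>
  (Vs S).bind fun T =>
    (Mix (Multiset.card S) T).bind fun D₁ =>
      (Mix (Multiset.card S) T).bind fun D₂ =>
        PMF.pure (S + D₁ + D₂ + Multiset.replicate (e (Multiset.card S)) x₀)

lemma VaddOf_additive (Vs : Adversary X) (Mix : ℕ → Multiset X → PMF (Multiset X))
    (e : ℕ → ℕ) (x₀ : X) : IsAdditive (VaddOf Vs Mix e x₀) := by
  intro S T' hT'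
  rw [VaddOf, PMF.mem_support_bind_iff] at hT'
  obtain ⟨T, _, hT'⟩ := hT'
  rw [PMF.mem_support_bind_iff] at hT'
  obtain ⟨D₁, _, hT'⟩ := hT'
  rw [PMF.mem_support_bind_iff] at hT'
  obtain ⟨D₂, _, hT'⟩ := hT'
  rw [PMF.support_pure, Set.mem_singleton_iff] at hT'
  subst hT'
  calc S ≤ S + D₁ := Multiset.le_add_right _ _
    _ ≤ S + D₁ + D₂ := Multiset.le_add_right _ _
    _ ≤ S + D₁ + D₂ + Multiset.replicate (e (Multiset.card S)) x₀ := Multiset.le_add_right _ _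

lemma VaddOf_card (Vs : Adversary X) (Mix : ℕ → Multiset X → PMF (Multiset X))
    (e : ℕ → ℕ) (x₀ : X) (c : ℕ → ℕ)
    (hMix : ∀ n T D, D ∈ (Mix n T).support → Multiset.card D = n - c n) :
    ∀ S T', T' ∈ (VaddOf Vs Mix e x₀ S).support →
      Multiset.card T' = Multiset.card S + (Multiset.card S - c (Multiset.card S)) +
        (Multiset.card S - c (Multiset.card S)) + e (Multiset.card S) := by
  intro S T' hT'
  rw [VaddOf, PMF.mem_support_bind_iff] at hT'
  obtain ⟨T, _, hT'⟩ := hT'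
  rw [PMF.mem_support_bind_iff] at hT'
  obtain ⟨D₁, hD₁, hT'⟩ := hT'
  rw [PMF.mem_support_bind_iff] at hT'
  obtain ⟨D₂, hD₂, hT'⟩ := hT'
  rw [PMF.support_pure, Set.mem_singleton_iff] at hT'
  subst hT'
  simp [Multiset.card_add, hMix _ _ _ hD₁, hMix _ _ _ hD₂]

lemma VaddOf_push (Vs : Adversary X) (hVs : IsSubtractive Vs)
    (Mix : ℕ → Multiset X → PMF (Multiset X)) (e : ℕ → ℕ) (x₀ : X)
    (P : PMF (Multiset X)) (m : ℕ) (hP : ∀ S ∈ P.support, Multiset.card S = m)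
    (dflt : Multiset X → PMF (Multiset X)) :
    P.bind (VaddOf Vs Mix e x₀) = (P.bind Vs).bind (fun T =>
      (condK (JointD Vs P) dflt T).bind fun D =>
        (Mix m T).bind fun D₁ => (Mix m T).bind fun D₂ =>
          PMF.pure (T + D + D₁ + D₂ + Multiset.replicate (e m) x₀)) := by
  have h1 : P.bind (VaddOf Vs Mix e x₀) = P.bind fun S => (Vs S).bind fun T =>
      (Mix m T).bind fun D₁ => (Mix m T).bind fun D₂ =>
        PMF.pure (S + D₁ + D₂ + Multiset.replicate (e m) x₀) := by
    refine PMF_bind_congr _ _ _ fun S hS => ?_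
    show (Vs S).bind (fun T =>
      (Mix (Multiset.card S) T).bind fun D₁ =>
        (Mix (Multiset.card S) T).bind fun D₂ =>
          PMF.pure (S + D₁ + D₂ + Multiset.replicate (e (Multiset.card S)) x₀)) = _
    rw [hP S hS]
  have h2 : ∀ g : Multiset X × Multiset X → PMF (Multiset X),
      (JointD Vs P).bind g = P.bind fun S => (Vs S).bind fun T => g (T, S - T) := by
    intro g
    rw [JointD, PMF.bind_bind]
    refine PMF_bind_congr _ _ _ fun S _ => ?_
    rw [PMF.bind_map]
    rfl
  have h3 : JointD Vs P
      = (P.bind Vs).bind fun T => (condK (JointD Vs P) dflt T).map (Prod.mk T) := by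
    conv_lhs => rw [← disint (JointD Vs P) dflt]
    rw [margFst_JointD]
  have h4 : (JointD Vs P).bind (fun td =>
        (Mix m td.1).bind fun D₁ => (Mix m td.1).bind fun D₂ =>
          PMF.pure (td.1 + td.2 + D₁ + D₂ + Multiset.replicate (e m) x₀))
      = P.bind fun S => (Vs S).bind fun T =>
        (Mix m T).bind fun D₁ => (Mix m T).bind fun D₂ =>
          PMF.pure (S + D₁ + D₂ + Multiset.replicate (e m) x₀) := by
    rw [h2]
    refine PMF_bind_congr _ _ _ fun S hS => PMF_bind_congr _ _ _ fun T hT => ?_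
    beta_reduce
    rw [show T + (S - T) = S from by
      rw [add_comm]; exact tsub_add_cancel_of_le (hVs S T hT)]
  rw [h1, ← h4]
  conv_lhs => rw [h3, PMF.bind_bind]
  refine PMF_bind_congr _ _ _ fun T _ => ?_
  rw [PMF.bind_map]
  rfl

end Construction
section HalfBound

lemma coinPMF_apply (t : Bool) : coinPMF t = 2⁻¹ := by
  have h2 : (1 : ℝ≥0∞) - 2⁻¹ = 2⁻¹ := by
    conv_lhs => rw [← ENNReal.inv_two_add_inv_two]
    rw [ENNReal.add_sub_cancel_right (by simp : (2 : ℝ≥0∞)⁻¹ ≠ ∞)]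
  cases t <;> simp [coinPMF, PMF.bernoulli_apply, ENNReal.coe_sub, ENNReal.coe_inv_two, h2]

/-- The count distributions `k + Binomial(2, 1/2)`. -/
noncomputable def Wcnt (k : ℕ) : PMF ℕ :=
  coinPMF.bind fun t2 => coinPMF.bind fun t3 =>
    PMF.pure (k + (if t2 then 1 else 0) + (if t3 then 1 else 0))

lemma Wcnt_apply (k n : ℕ) : Wcnt k n =
    2⁻¹ * (2⁻¹ * (if n = k then 1 else 0) + 2⁻¹ * (if n = k + 1 then 1 else 0))
      + 2⁻¹ * (2⁻¹ * (if n = k + 1 then 1 else 0) + 2⁻¹ * (if n = k + 2 then 1 else 0)) := by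
  classical
  rw [Wcnt, PMF.bind_apply, tsum_bool]
  rw [PMF.bind_apply, PMF.bind_apply, tsum_bool, tsum_bool]
  simp only [coinPMF_apply, PMF.pure_apply, if_true, if_false]
  norm_num

lemma Dtv_Wcnt : Dtv (Wcnt 1) (Wcnt 0) ≤ 2⁻¹ := by
  classical
  have h4 : (4 : ℝ≥0∞)⁻¹ = 2⁻¹ * 2⁻¹ := by
    rw [show (4 : ℝ≥0∞) = 2 * 2 by norm_num,
      ENNReal.mul_inv (Or.inl (by norm_num)) (Or.inl (by norm_num))]
  have hpt : ∀ n, Wcnt 1 n - Wcnt 0 n ≤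
      (if n = 2 then (4:ℝ≥0∞)⁻¹ else if n = 3 then (4:ℝ≥0∞)⁻¹ else 0) := by
    intro n
    rw [tsub_le_iff_right, Wcnt_apply, Wcnt_apply]
    match n with
    | 0 => norm_num
    | 1 => norm_num <;> exact le_add_self
    | 2 => norm_num [h4]
    | 3 => norm_num [h4]
    | (n+4) =>
      have c1 : ¬(n + 4 = 1) := by omega
      have c2 : ¬(n + 4 = 2) := by omega
      have c3 : ¬(n + 4 = 3) := by omega
      have c0 : ¬(n + 4 = 0) := by omega
      simp [c0, c1, c2, c3]
  calc Dtv (Wcnt 1) (Wcnt 0) ≤ ∑' n, (if n = 2 then (4:ℝ≥0∞)⁻¹ else if n = 3 then (4:ℝ≥0∞)⁻¹ else 0) :=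
        ENNReal.tsum_le_tsum hpt
    _ = ∑ n ∈ ({2, 3} : Finset ℕ), (if n = 2 then (4:ℝ≥0∞)⁻¹ else if n = 3 then (4:ℝ≥0∞)⁻¹ else 0) := by
        refine tsum_eq_sum fun b hb => ?_
        simp only [Finset.mem_insert, Finset.mem_singleton] at hb
        push_neg at hb
        simp [hb.1, hb.2]
    _ = 2⁻¹ := by
        rw [Finset.sum_insert (by norm_num), Finset.sum_singleton]
        norm_num [h4]
        rw [← mul_add, ENNReal.inv_two_add_inv_two, mul_one]

lemma half_bound {β γ : Type*} (A B : PMF β) (h : β → β → β → PMF γ)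
    (hs1 : ∀ a b c, h a b c = h b a c) (hs2 : ∀ a b c, h a b c = h a c b) :
    Dtv (A.bind fun a => (mixAB A B).bind fun b => (mixAB A B).bind fun c => h a b c)
        (B.bind fun a => (mixAB A B).bind fun b => (mixAB A B).bind fun c => h a b c) ≤ 2⁻¹ := by
  classical
  set N : Bool → Bool → Bool → PMF γ := fun t1 t2 t3 =>
    (if t1 then A else B).bind fun a =>
      (if t2 then A else B).bind fun b =>
        (if t3 then A else B).bind fun c => h a b c with hN
  have swap12 : ∀ t1 t2 t3, N t1 t2 t3 = N t2 t1 t3 := by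
    intro t1 t2 t3
    rw [hN]
    beta_reduce
    rw [PMF.bind_comm (if t1 then A else B) (if t2 then A else B)]
    exact PMF_bind_congr _ _ _ fun b _ => PMF_bind_congr _ _ _ fun a _ =>
      PMF_bind_congr _ _ _ fun c _ => hs1 a b c
  have swap23 : ∀ t1 t2 t3, N t1 t2 t3 = N t1 t3 t2 := by
    intro t1 t2 t3
    rw [hN]
    beta_reduce
    refine PMF_bind_congr _ _ _ fun a _ => ?_
    rw [PMF.bind_comm (if t2 then A else B) (if t3 then A else B)]
    exact PMF_bind_congr _ _ _ fun c _ => PMF_bind_congr _ _ _ fun b _ => hs2 a b c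
  set Cnt : ℕ → PMF γ := fun j =>
    if j = 0 then N false false false
    else if j = 1 then N true false false
    else if j = 2 then N true true false
    else N true true true with hCntDef
  have hCnt : ∀ t1 t2 t3, N t1 t2 t3 =
      Cnt ((if t1 then 1 else 0) + (if t2 then 1 else 0) + (if t3 then 1 else 0)) := by
    intro t1 t2 t3
    cases t1 <;> cases t2 <;> cases t3 <;> simp only [hCntDef] <;> norm_num
    · rw [swap23 false false true, swap12 false true false]
    · rw [swap12 false true false]
    · rw [swap12 false true true, swap23 true false true]
    · rw [swap23 true false true]
  have hmix : ∀ t1 : Bool, ((if t1 then A else B).bind fun a =>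
        (mixAB A B).bind fun b => (mixAB A B).bind fun c => h a b c)
      = coinPMF.bind fun t2 => coinPMF.bind fun t3 => N t1 t2 t3 := by
    intro t1
    calc ((if t1 then A else B).bind fun a =>
          (mixAB A B).bind fun b => (mixAB A B).bind fun c => h a b c)
        = (if t1 then A else B).bind fun a => coinPMF.bind fun t2 =>
            (if t2 then A else B).bind fun b => coinPMF.bind fun t3 =>
              (if t3 then A else B).bind fun c => h a b c := by
          simp only [mixAB, PMF.bind_bind]
      _ = (if t1 then A else B).bind fun a => coinPMF.bind fun t2 =>
            coinPMF.bind fun t3 => (if t2 then A else B).bind fun b =>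
              (if t3 then A else B).bind fun c => h a b c := by
          refine PMF_bind_congr _ _ _ fun a _ => PMF_bind_congr _ _ _ fun t2 _ => ?_
          exact PMF.bind_comm _ _ _
      _ = coinPMF.bind fun t2 => (if t1 then A else B).bind fun a =>
            coinPMF.bind fun t3 => (if t2 then A else B).bind fun b =>
              (if t3 then A else B).bind fun c => h a b c := PMF.bind_comm _ _ _
      _ = coinPMF.bind fun t2 => coinPMF.bind fun t3 => N t1 t2 t3 := by
          refine PMF_bind_congr _ _ _ fun t2 _ => ?_
          exact PMF.bind_comm _ _ _
  have hW : ∀ k : ℕ, (Wcnt k).bind Cnt = coinPMF.bind fun t2 => coinPMF.bind fun t3 =>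
      Cnt (k + (if t2 then 1 else 0) + (if t3 then 1 else 0)) := by
    intro k
    rw [Wcnt]
    simp only [PMF.bind_bind, PMF.pure_bind]
  have hA : (A.bind fun a => (mixAB A B).bind fun b => (mixAB A B).bind fun c => h a b c)
      = (Wcnt 1).bind Cnt := by
    have := hmix true
    rw [show (if true then A else B) = A from rfl] at this
    rw [this, hW 1]
    refine PMF_bind_congr _ _ _ fun t2 _ => PMF_bind_congr _ _ _ fun t3 _ => ?_
    have := hCnt true t2 t3
    rw [show (if true then (1:ℕ) else 0) = 1 from rfl] at this
    rw [this]
  have hB : (B.bind fun a => (mixAB A B).bind fun b => (mixAB A B).bind fun c => h a b c)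
      = (Wcnt 0).bind Cnt := by
    have := hmix false
    rw [show (if false then A else B) = B from rfl] at this
    rw [this, hW 0]
    refine PMF_bind_congr _ _ _ fun t2 _ => PMF_bind_congr _ _ _ fun t3 _ => ?_
    have := hCnt false t2 t3
    rw [show (if false then (1:ℕ) else 0) = 0 from rfl] at this
    rw [this]
  rw [hA, hB]
  exact (Dtv_bind_le_left _ _ _).trans Dtv_Wcnt

end HalfBound

/-- If a subtractive adaptive adversary `V_sub` with fixed constant budget
`η` successfully `(4αη + 4γ', ζ)`-confuses `C`-generated samples of every size `m`
(with `γ', ζ ∈ (0,1/2)`), then there is an adaptive additive adversary with fixed constant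
budget at most `2η` that is a universal α-adversary for `C`. -/
theorem stmt11 {X : Type*} [Countable X] (C : Set (PMF X)) (α : ℝ) (hα : 1 ≤ α)
    (Vs : Adversary X) (hVs : IsSubtractive Vs) (η : ℝ) (hη : η ∈ Set.Ioo (0 : ℝ) 1)
    (hb : FixedBudgetSub Vs η)
    (γ' ζ : ℝ) (hγ' : γ' ∈ Set.Ioo (0 : ℝ) (1 / 2)) (hζ : ζ ∈ Set.Ioo (0 : ℝ) (1 / 2))
    (hconf : ∀ m : ℕ, Confuses C Vs (4 * α * η + 4 * γ') ζ m) :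
    ∃ (Vadd : Adversary X) (η' : ℝ), IsAdditive Vadd ∧ 0 < η' ∧ η' ≤ 2 * η ∧
      FixedBudgetAdd Vadd η' ∧ UniversalAdversary C α Vadd η' := by
  classical
  obtain ⟨hη0, hη1⟩ := hη
  obtain ⟨hγ'0, hγ'half⟩ := hγ'
  obtain ⟨hζ0, hζhalf⟩ := hζ
  obtain ⟨c, hVc, hcb⟩ := hb
  have hconf' : ∀ m, ∃ p ∈ C, ∃ Q : PMF (PMF X), Q.support ⊆ C ∧
      (∀ q ∈ Q.support, (4 * α * η + 4 * γ') < tv p q) ∧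
      tv (advPush Vs (metaSample Q m)) (advPush Vs (iid p m)) < ζ := hconf
  choose pm hpmC Qm hQsupp hQfar hQclose using hconf'
  obtain ⟨x₀, -⟩ := (pm 0).support_nonempty
  -- budget numerics
  have hcle : ∀ n, c n ≤ n := by
    intro n
    have h1 := (hcb n).1
    have h2 : (0:ℝ) ≤ η * n := by positivity
    have h3 : (c n : ℝ) < n + 1 := by linarith
    have h4 : c n < n + 1 := by exact_mod_cast h3
    omega
  set a : ℕ → ℕ := fun n => ⌊2 * η * n⌋₊ with ha
  have hfa : ∀ n, 2 * (n - c n) ≤ a n := by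
    intro n
    rw [ha]
    refine Nat.le_floor ?_
    have hcast : ((n - c n : ℕ) : ℝ) = (n : ℝ) - c n := by
      rw [Nat.cast_sub (hcle n)]
    have h2 := (hcb n).2
    push_cast
    rw [hcast]
    linarith
  set e : ℕ → ℕ := fun n => a n - 2 * (n - c n) with he
  set MixF : ℕ → Multiset X → PMF (Multiset X) := fun n T =>
    mixAB (condK (JointD Vs (iid (pm n) n))
        (fun _ => PMF.pure (Multiset.replicate (n - c n) x₀)) T)
      (condK (JointD Vs (metaSample (Qm n) n))
        (fun _ => PMF.pure (Multiset.replicate (n - c n) x₀)) T) with hMixF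
  -- card invariant for the mixture kernel
  have hMixCard : ∀ n T D, D ∈ (MixF n T).support → Multiset.card D = n - c n := by
    intro n T D hD
    rw [hMixF] at hD
    beta_reduce at hD
    rw [mixAB, PMF.mem_support_bind_iff] at hD
    obtain ⟨t, -, hD⟩ := hD
    have hcases : D ∈ (condK (JointD Vs (iid (pm n) n))
          (fun _ => PMF.pure (Multiset.replicate (n - c n) x₀)) T).support ∨
        D ∈ (condK (JointD Vs (metaSample (Qm n) n))
          (fun _ => PMF.pure (Multiset.replicate (n - c n) x₀)) T).support := by
      cases t
      · right; simpa using hD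
      · left; simpa using hD
    have hcard : ∀ P : PMF (Multiset X), (∀ S ∈ P.support, Multiset.card S = n) →
        D ∈ (condK (JointD Vs P)
          (fun _ => PMF.pure (Multiset.replicate (n - c n) x₀)) T).support →
        Multiset.card D = n - c n := by
      intro P hP hDK
      rcases condK_support _ _ _ _ hDK with hJ | ⟨-, hdf⟩
      · obtain ⟨S, hS, hTS, hle, rfl⟩ := JointD_support Vs hVs P T D hJ
        rw [Multiset.card_sub hle, hVc S T hTS, hP S hS]
      · rw [PMF.support_pure, Set.mem_singleton_iff] at hdf
        rw [hdf, Multiset.card_replicate]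
    rcases hcases with h | h
    · exact hcard _ (iid_support_card (pm n) n) h
    · exact hcard _ (metaSample_support_card (Qm n) n) h
  set Vadd : Adversary X := VaddOf Vs MixF e x₀ with hVaddDef
  refine ⟨Vadd, 2 * η, VaddOf_additive _ _ _ _, by linarith, le_refl _, ?_, ?_⟩
  · -- FixedBudgetAdd
    refine ⟨fun n => n + a n, fun S T hT => ?_, fun n => ?_⟩
    · have h := VaddOf_card Vs MixF e x₀ c hMixCard S T hT
      rw [h]
      beta_reduce
      have h2 : e (Multiset.card S) = a (Multiset.card S)
          - 2 * (Multiset.card S - c (Multiset.card S)) := by rw [he]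
      have h3 := hfa (Multiset.card S)
      omega
    · have hfl : (2 * η * n : ℝ) - 1 < a n := by
        have := Nat.sub_one_lt_floor (2 * η * n)
        rw [ha]
        exact this
      have hfu : (a n : ℝ) ≤ 2 * η * n := by
        rw [ha]
        exact Nat.floor_le (by positivity)
      constructor
      · push_cast
        linarith
      · push_cast
        linarith
  · -- UniversalAdversary
    rintro ⟨A, mc, hA⟩
    set δ : ℝ := (1 / 2 - ζ) / 4 with hδdef
    have hδ0 : 0 < δ := by rw [hδdef]; linarith
    have hδ1 : δ < 1 := by rw [hδdef]; linarith
    have hγ'1 : γ' < 1 := by linarith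
    set m : ℕ := mc γ' δ with hm
    set P1 : PMF (Multiset X) := iid (pm m) m with hP1
    set P2 : PMF (Multiset X) := metaSample (Qm m) m with hP2
    set dfl : Multiset X → PMF (Multiset X) :=
      fun _ => PMF.pure (Multiset.replicate (m - c m) x₀) with hdfl
    set E : Set (Multiset X) := {T | tv (A T) (pm m) ≤ α * (2 * η) + γ'} with hE
    -- learner guarantees
    have hP1E : 1 - ENNReal.ofReal δ ≤ probEvent (P1.bind Vadd) E :=
      hA (pm m) (hpmC m) γ' δ hγ'0 hγ'1 hδ0 hδ1 m le_rfl
    have hP2Ec : 1 - ENNReal.ofReal δ ≤ probEvent (P2.bind Vadd) Eᶜ := by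
      have hsplit : P2.bind Vadd = (Qm m).bind fun q => (iid q m).bind Vadd :=
        PMF.bind_bind (Qm m) (fun q => iid q m) Vadd
      rw [hsplit, probEvent, PMF.toOuterMeasure_bind_apply]
      have hbd : ∀ q, (Qm m) q * (1 - ENNReal.ofReal δ)
          ≤ (Qm m) q * ((iid q m).bind Vadd).toOuterMeasure Eᶜ := by
        intro q
        by_cases hq : (Qm m) q = 0
        · simp [hq]
        · refine mul_le_mul_right ?_ _
          have hqs : q ∈ (Qm m).support := (PMF.mem_support_iff _ q).2 hq
          have hq' := hA q (hQsupp m hqs) γ' δ hγ'0 hγ'1 hδ0 hδ1 m le_rfl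
          have hfar := hQfar m q hqs
          refine le_trans hq' (probEvent_mono _ fun T hT => ?_)
          simp only [Set.mem_setOf_eq] at hT
          simp only [hE, Set.mem_compl_iff, Set.mem_setOf_eq, not_le]
          have htri := tv_triangle (pm m) (A T) q
          rw [tv_symm (pm m) (A T)] at htri
          linarith
      calc 1 - ENNReal.ofReal δ = ∑' q, (Qm m) q * (1 - ENNReal.ofReal δ) := by
            rw [ENNReal.tsum_mul_right, (Qm m).tsum_coe, one_mul]
        _ ≤ _ := ENNReal.tsum_le_tsum hbd
    -- pushforward identities
    have hpush1 : P1.bind Vadd = (P1.bind Vs).bind (fun T =>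
        (condK (JointD Vs P1) dfl T).bind fun D =>
          (MixF m T).bind fun D₁ => (MixF m T).bind fun D₂ =>
            PMF.pure (T + D + D₁ + D₂ + Multiset.replicate (e m) x₀)) :=
      VaddOf_push Vs hVs MixF e x₀ P1 m (iid_support_card (pm m) m) dfl
    have hpush2 : P2.bind Vadd = (P2.bind Vs).bind (fun T =>
        (condK (JointD Vs P2) dfl T).bind fun D =>
          (MixF m T).bind fun D₁ => (MixF m T).bind fun D₂ =>
            PMF.pure (T + D + D₁ + D₂ + Multiset.replicate (e m) x₀)) :=
      VaddOf_push Vs hVs MixF e x₀ P2 m (metaSample_support_card (Qm m) m) dfl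
    -- upper bound on the TV discrepancy of the two pushforwards
    have hclose : Dtv (P1.bind Vs) (P2.bind Vs) ≤ ENNReal.ofReal ζ := by
      have h := hQclose m
      simp only [advPush] at h
      have heq : Dtv (P1.bind Vs) (P2.bind Vs)
          = ENNReal.ofReal (tv (P1.bind Vs) (P2.bind Vs)) := by
        rw [tv_eq_Dtv, ENNReal.ofReal_toReal (Dtv_ne_top _ _)]
      rw [heq]
      refine ENNReal.ofReal_le_ofReal ?_
      rw [tv_symm]
      exact le_of_lt h
    have hub : Dtv (P1.bind Vadd) (P2.bind Vadd) ≤ 2⁻¹ + ENNReal.ofReal ζ := by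
      rw [hpush1, hpush2]
      refine le_trans (Dtv_triangle _ ((P1.bind Vs).bind (fun T =>
        (condK (JointD Vs P2) dfl T).bind fun D =>
          (MixF m T).bind fun D₁ => (MixF m T).bind fun D₂ =>
            PMF.pure (T + D + D₁ + D₂ + Multiset.replicate (e m) x₀))) _) ?_
      refine add_le_add ?_ ?_
      · refine Dtv_bind_le_right _ _ _ 2⁻¹ fun T _ => ?_
        exact half_bound (condK (JointD Vs P1) dfl T) (condK (JointD Vs P2) dfl T)
          (fun x y z => PMF.pure (T + x + y + z + Multiset.replicate (e m) x₀))
          (fun x y z => by beta_reduce; rw [add_right_comm T x y])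
          (fun x y z => by beta_reduce; rw [add_right_comm (T + x) y z])
      · exact le_trans (Dtv_bind_le_left _ _ _) hclose
    -- lower bound on the TV discrepancy of the two pushforwards
    have h1 : probEvent (P2.bind Vadd) E ≤ ENNReal.ofReal δ := by
      have hcpl := probEvent_compl (P2.bind Vadd) E
      have hfin : probEvent (P2.bind Vadd) Eᶜ ≠ ∞ :=
        ((probEvent_le_one _ _).trans_lt ENNReal.one_lt_top).ne
      have hEeq : probEvent (P2.bind Vadd) E = 1 - probEvent (P2.bind Vadd) Eᶜ :=
        ENNReal.eq_sub_of_add_eq hfin hcpl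
      rw [hEeq]
      refine le_trans (tsub_le_tsub_left hP2Ec 1) ?_
      rw [tsub_le_iff_right, add_comm]
      exact le_tsub_add
    have h2 : probEvent (P1.bind Vadd) E
        ≤ Dtv (P1.bind Vadd) (P2.bind Vadd) + probEvent (P2.bind Vadd) E :=
      tsub_le_iff_right.1 (probEvent_tsub_le _ _ E)
    have hlb : (1:ℝ≥0∞) ≤ Dtv (P1.bind Vadd) (P2.bind Vadd)
        + ENNReal.ofReal δ + ENNReal.ofReal δ := by
      calc (1:ℝ≥0∞) ≤ (1 - ENNReal.ofReal δ) + ENNReal.ofReal δ := le_tsub_add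
        _ ≤ probEvent (P1.bind Vadd) E + ENNReal.ofReal δ := add_le_add_left hP1E _
        _ ≤ (Dtv (P1.bind Vadd) (P2.bind Vadd) + probEvent (P2.bind Vadd) E)
              + ENNReal.ofReal δ := add_le_add_left h2 _
        _ ≤ (Dtv (P1.bind Vadd) (P2.bind Vadd) + ENNReal.ofReal δ)
              + ENNReal.ofReal δ := add_le_add_left (add_le_add_right h1 _) _
    -- combine
    have hfinal : (1:ℝ≥0∞) ≤ (2⁻¹ + ENNReal.ofReal ζ) + ENNReal.ofReal δ + ENNReal.ofReal δ :=
      le_trans hlb (add_le_add_left (add_le_add_left hub _) _)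
    have hhalfR : (2:ℝ≥0∞)⁻¹ = ENNReal.ofReal (1 / 2) := by
      rw [ENNReal.ofReal_div_of_pos (by norm_num), ENNReal.ofReal_one, ENNReal.ofReal_ofNat,
        one_div]
    rw [hhalfR, ← ENNReal.ofReal_add (by norm_num) hζ0.le,
      ← ENNReal.ofReal_add (by linarith) hδ0.le,
      ← ENNReal.ofReal_add (by linarith) hδ0.le] at hfinal
    have hlt : (1 / 2 + ζ + δ + δ : ℝ) < 1 := by rw [hδdef]; linarith
    exact absurd hfinal (not_le.2 (ENNReal.ofReal_lt_one.2 hlt))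
end

section
/- Let α ≥ 1. If a class C of distributions on a countable domain X is not obliviously subtractively α-robustly learnable, then C is also not adaptively subtractively α-robustly learnable with respect to ground-truth-aware subtractive adaptive adversaries. -/
open scoped ENNReal NNReal

/-- `C` is obliviously subtractively α-robustly learnable: a learner succeeds given i.i.d.
samples from any `p'` with `p = (1−η)p' + ηr` for some `r`, for any `p ∈ C`. -/
def ObliviouslySubtractivelyRobustlyLearnable {X : Type*} (C : Set (PMF X)) (α : ℝ) : Prop :=
  ∃ (A : Multiset X → PMF X) (mc : ℝ → ℝ → ℕ),
    ∀ p ∈ C, ∀ η : ℝ, 0 ≤ η → η < 1 → ∀ p' r : PMF X,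
      (∀ x, p x = ENNReal.ofReal (1 - η) * p' x + ENNReal.ofReal η * r x) →
      ∀ ε δ : ℝ, 0 < ε → ε < 1 → 0 < δ → δ < 1 → ∀ m : ℕ, mc ε δ ≤ m →
        1 - ENNReal.ofReal δ ≤ probEvent (iid p' m) {S | tv (A S) p ≤ α * η + ε}

/-- A ground-truth-aware adaptive adversary is subtractive if `V(S,q) ⊆ S` almost surely. -/
def GTSubtractive {X : Type*} (V : Multiset X → PMF X → PMF (Multiset X)) : Prop :=
  ∀ S q T, T ∈ (V S q).support → T ≤ S

/-- Fixed constant budget `η` for a ground-truth-aware subtractive adaptive adversary. -/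
def GTFixedBudgetSub {X : Type*} (V : Multiset X → PMF X → PMF (Multiset X)) (η : ℝ) : Prop :=
  ∃ c : ℕ → ℕ, (∀ S q T, T ∈ (V S q).support → Multiset.card T = c (Multiset.card S)) ∧
    ∀ m : ℕ, η * m - 1 < (m : ℝ) - c m ∧ (m : ℝ) - c m ≤ η * m

/-- `C` is adaptively subtractively α-robustly learnable with respect to ground-truth-aware
subtractive adaptive adversaries with fixed constant budgets. -/
def GTAwareSubtractivelyRobustlyLearnable {X : Type*} (C : Set (PMF X)) (α : ℝ) : Prop :=
  ∃ (A : Multiset X → PMF X) (mc : ℝ → ℝ → ℕ),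
    ∀ V : Multiset X → PMF X → PMF (Multiset X), GTSubtractive V →
      ∀ η : ℝ, 0 < η → η < 1 → GTFixedBudgetSub V η →
        ∀ p ∈ C, ∀ ε δ : ℝ, 0 < ε → ε < 1 → 0 < δ → δ < 1 → ∀ m : ℕ, mc ε δ ≤ m →
          1 - ENNReal.ofReal δ ≤
            probEvent ((iid p m).bind fun S => V S p) {T | tv (A T) p ≤ α * η + ε}


noncomputable section StmtAux
open scoped ENNReal
open PMF

namespace StmtAux

variable {X : Type*} {β : Type*} {γ : Type*}

/-- Bernoulli distribution with an `ℝ≥0∞` parameter. -/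
def _root_.PMF.bernoulliE (p : ℝ≥0∞) (h : p ≤ 1) : PMF Bool :=
  PMF.ofFintype (fun b => cond b p (1 - p)) (by simp [add_tsub_cancel_of_le h])

theorem _root_.PMF.bernoulliE_apply {p : ℝ≥0∞} (h : p ≤ 1) (b : Bool) :
    PMF.bernoulliE p h b = cond b p (1 - p) := by
  simp only [PMF.bernoulliE, PMF.ofFintype_apply]

/-! ### probEvent basics -/

lemma pe_def (μ : PMF β) (E : Set β) : probEvent μ E = ∑' x, E.indicator (⇑μ) x :=
  PMF.toOuterMeasure_apply μ E

lemma pe_mono (μ : PMF β) {E F : Set β} (h : E ⊆ F) : probEvent μ E ≤ probEvent μ F := by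
  rw [pe_def, pe_def]
  exact ENNReal.tsum_le_tsum fun x => Set.indicator_le_indicator_of_subset h (fun _ => zero_le) x

lemma pe_le_one (μ : PMF β) (E : Set β) : probEvent μ E ≤ 1 := by
  rw [pe_def]
  calc ∑' x, E.indicator (⇑μ) x ≤ ∑' x, μ x :=
        ENNReal.tsum_le_tsum fun x => Set.indicator_le_self _ _ x
    _ = 1 := μ.tsum_coe

lemma pe_univ (μ : PMF β) : probEvent μ Set.univ = 1 := by
  rw [pe_def]
  simp [Set.indicator_univ, μ.tsum_coe]

lemma pe_add_compl (μ : PMF β) (E : Set β) : probEvent μ E + probEvent μ Eᶜ = 1 := by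
  rw [pe_def, pe_def, ← ENNReal.tsum_add]
  rw [← μ.tsum_coe]
  refine tsum_congr fun x => ?_
  by_cases hx : x ∈ E
  · simp [Set.indicator_of_mem hx, Set.indicator_of_notMem (by simpa using hx : x ∉ Eᶜ)]
  · simp [Set.indicator_of_notMem hx, Set.indicator_of_mem (by simpa using hx : x ∈ Eᶜ)]

lemma pe_compl (μ : PMF β) (E : Set β) : probEvent μ Eᶜ = 1 - probEvent μ E := by
  have h := pe_add_compl μ E
  have h1 : probEvent μ E ≠ ⊤ := (pe_le_one μ E).trans_lt (by norm_num) |>.ne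
  rw [← h, ENNReal.add_sub_cancel_left h1]

lemma pe_pure (a : β) (E : Set β) :
    probEvent (PMF.pure a) E = E.indicator (fun _ => (1 : ℝ≥0∞)) a := by
  rw [pe_def]
  rw [tsum_eq_single a]
  · by_cases ha : a ∈ E <;>
      simp [Set.indicator_of_mem, Set.indicator_of_notMem, ha, PMF.pure_apply]
  · intro b hb
    by_cases hbE : b ∈ E
    · simp [Set.indicator_of_mem hbE, PMF.pure_apply, hb]
    · simp [Set.indicator_of_notMem hbE]

lemma tsum_bind (μ : PMF β) (f : β → PMF γ) (g : γ → ℝ≥0∞) :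
    ∑' c, (μ.bind f) c * g c = ∑' b, μ b * ∑' c, (f b) c * g c := by
  have : ∀ c, (μ.bind f) c * g c = ∑' b, μ b * (f b) c * g c := by
    intro c
    rw [PMF.bind_apply, ← ENNReal.tsum_mul_right]
  rw [tsum_congr this, ENNReal.tsum_comm]
  refine tsum_congr fun b => ?_
  rw [← ENNReal.tsum_mul_left]
  refine tsum_congr fun c => by ring

lemma pe_eq_tsum_mul (μ : PMF β) (E : Set β) :
    probEvent μ E = ∑' x, μ x * E.indicator (fun _ => (1 : ℝ≥0∞)) x := by
  rw [pe_def]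
  refine tsum_congr fun x => ?_
  by_cases hx : x ∈ E <;>
    simp [Set.indicator_of_mem, Set.indicator_of_notMem, hx]

lemma pe_bind (μ : PMF β) (f : β → PMF γ) (E : Set γ) :
    probEvent (μ.bind f) E = ∑' b, μ b * probEvent (f b) E := by
  rw [pe_eq_tsum_mul, tsum_bind]
  exact tsum_congr fun b => by rw [pe_eq_tsum_mul]

lemma markov (μ : PMF β) (h : β → ℝ≥0∞) (a : ℝ≥0∞) :
    a * probEvent μ {x | a ≤ h x} ≤ ∑' x, μ x * h x := by
  rw [pe_eq_tsum_mul, ← ENNReal.tsum_mul_left]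
  refine ENNReal.tsum_le_tsum fun x => ?_
  by_cases hx : x ∈ {x | a ≤ h x}
  · rw [Set.indicator_of_mem hx]
    calc a * (μ x * 1) = μ x * a := by ring
      _ ≤ μ x * h x := mul_le_mul_right hx _
  · simp [Set.indicator_of_notMem hx]

lemma bind_congr' (μ : PMF β) (f g : β → PMF γ) (h : ∀ b ∈ μ.support, f b = g b) :
    μ.bind f = μ.bind g := by
  ext c
  rw [PMF.bind_apply, PMF.bind_apply]
  refine tsum_congr fun b => ?_
  by_cases hb : b ∈ μ.support
  · rw [h b hb]
  · simp only [PMF.mem_support_iff, not_not] at hb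
    rw [hb, zero_mul, zero_mul]

end StmtAux
namespace StmtAux

variable {X : Type*} {β : Type*}

/-! ### total variation -/

/-- ENNReal version of (twice) the total variation distance. -/
def etv (p q : PMF X) : ℝ≥0∞ := ∑' x, ((p x - q x) + (q x - p x))

lemma etv_le_two (p q : PMF X) : etv p q ≤ 2 := by
  have : ∀ x, (p x - q x) + (q x - p x) ≤ p x + q x := fun x =>
    add_le_add tsub_le_self tsub_le_self
  calc etv p q ≤ ∑' x, (p x + q x) := ENNReal.tsum_le_tsum this
    _ = 1 + 1 := by rw [ENNReal.tsum_add, p.tsum_coe, q.tsum_coe]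
    _ = 2 := by norm_num

lemma etv_ne_top (p q : PMF X) : etv p q ≠ ⊤ :=
  ((etv_le_two p q).trans_lt (by norm_num)).ne

lemma term_ne_top (p q : PMF X) (x : X) : (p x - q x) + (q x - p x) ≠ ⊤ := by
  have h1 : p x - q x ≤ 1 := tsub_le_self.trans (p.coe_le_one x)
  have h2 : q x - p x ≤ 1 := tsub_le_self.trans (q.coe_le_one x)
  exact ((add_le_add h1 h2).trans_lt (by norm_num)).ne

lemma abs_toReal_eq (a b : ℝ≥0∞) (ha : a ≠ ⊤) (hb : b ≠ ⊤) :
    |a.toReal - b.toReal| = ((a - b) + (b - a)).toReal := by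
  rcases le_total a b with h | h
  · rw [abs_sub_comm, abs_of_nonneg (by
      have := ENNReal.toReal_mono hb h
      linarith)]
    rw [tsub_eq_zero_of_le h, zero_add, ENNReal.toReal_sub_of_le h hb]
  · rw [abs_of_nonneg (by
      have := ENNReal.toReal_mono ha h
      linarith)]
    rw [tsub_eq_zero_of_le h, add_zero, ENNReal.toReal_sub_of_le h ha]

lemma tv_eq_etv (p q : PMF X) : tv p q = (etv p q).toReal / 2 := by
  rw [tv, etv, ENNReal.tsum_toReal_eq (fun x => term_ne_top p q x)]
  congr 1
  exact tsum_congr fun x => abs_toReal_eq (p x) (q x) (PMF.apply_ne_top p x)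
    (PMF.apply_ne_top q x)

lemma tv_le_one (p q : PMF X) : tv p q ≤ 1 := by
  rw [tv_eq_etv]
  have := ENNReal.toReal_mono (by norm_num : (2 : ℝ≥0∞) ≠ ⊤) (etv_le_two p q)
  simp only [ENNReal.toReal_ofNat] at this ⊢
  linarith

lemma etv_eq_ofReal (p q : PMF X) : etv p q = ENNReal.ofReal (2 * tv p q) := by
  rw [tv_eq_etv]
  rw [mul_div_cancel₀ _ (by norm_num : (2:ℝ) ≠ 0)]
  rw [ENNReal.ofReal_toReal (etv_ne_top p q)]

lemma tsub_tsum_le {f g : β → ℝ≥0∞} : (∑' b, f b) - (∑' b, g b) ≤ ∑' b, (f b - g b) := by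
  rw [tsub_le_iff_right, ← ENNReal.tsum_add]
  exact ENNReal.tsum_le_tsum fun b => le_tsub_add

lemma etv_bind_le (μ : PMF β) (A : β → PMF X) (p : PMF X) :
    etv (μ.bind A) p ≤ ∑' T, μ T * etv (A T) p := by
  have hrw : ∀ T, μ T * etv (A T) p = ∑' x, μ T * ((A T x - p x) + (p x - A T x)) := by
    intro T; rw [ENNReal.tsum_mul_left]; rfl
  rw [tsum_congr hrw, ENNReal.tsum_comm]
  refine ENNReal.tsum_le_tsum fun x => ?_
  have hb : (μ.bind A) x = ∑' T, μ T * A T x := PMF.bind_apply _ _ _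
  have hp : p x = ∑' T, μ T * p x := by rw [ENNReal.tsum_mul_right, μ.tsum_coe, one_mul]
  calc ((μ.bind A) x - p x) + (p x - (μ.bind A) x)
      = ((∑' T, μ T * A T x) - (∑' T, μ T * p x))
        + ((∑' T, μ T * p x) - (∑' T, μ T * A T x)) := by rw [← hb, ← hp]
    _ ≤ (∑' T, (μ T * A T x - μ T * p x)) + (∑' T, (μ T * p x - μ T * A T x)) :=
        add_le_add tsub_tsum_le tsub_tsum_le
    _ = ∑' T, ((μ T * A T x - μ T * p x) + (μ T * p x - μ T * A T x)) :=
        (ENNReal.tsum_add).symm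
    _ = ∑' T, μ T * ((A T x - p x) + (p x - A T x)) := by
        refine tsum_congr fun T => ?_
        have hne : μ T ≠ ⊤ := PMF.apply_ne_top μ T
        rw [mul_add, ENNReal.mul_sub (fun _ _ => hne), ENNReal.mul_sub (fun _ _ => hne)]

end StmtAux
namespace StmtAux

variable {X : Type*} {β : Type*}

/-! ### iid basics -/

lemma iid_zero (p : PMF X) : iid p 0 = PMF.pure 0 := rfl

lemma iid_succ (p : PMF X) (n : ℕ) :
    iid p (n + 1) = (iid p n).bind fun s => p.map fun x => x ::ₘ s := rfl

lemma iid_support_card (p : PMF X) (m : ℕ) {S : Multiset X}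
    (h : S ∈ (iid p m).support) : Multiset.card S = m := by
  induction m generalizing S with
  | zero =>
    rw [iid_zero, PMF.support_pure] at h
    simp [h.symm]  -- h : S ∈ {0}
  | succ n ih =>
    rw [iid_succ, PMF.mem_support_bind_iff] at h
    obtain ⟨s, hs, hS⟩ := h
    rw [PMF.mem_support_map_iff] at hS
    obtain ⟨x, _, hx⟩ := hS
    rw [← hx, Multiset.card_cons, ih hs]

lemma eq_pure_of_support_subset (μ : PMF β) (a : β) (h : μ.support ⊆ {a}) :
    μ = PMF.pure a := by
  have ha : μ a = 1 := by
    have := μ.tsum_coe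
    rwa [tsum_eq_single a (fun b hb => by
      by_contra hb0
      exact hb (h (by simpa [PMF.mem_support_iff] using hb0)))] at this
  ext b
  by_cases hb : b = a
  · subst hb; simp [ha, PMF.pure_apply]
  · have : μ b = 0 := by
      by_contra hb0
      exact hb (h (by simpa [PMF.mem_support_iff] using hb0))
    simp [this, PMF.pure_apply, hb]

/-! ### dropping uniformly random elements -/

open scoped Classical

/-- Remove one uniformly random element from a multiset. -/
noncomputable def drop1 (t : Multiset X) : PMF (Multiset X) :=
  if h : t = 0 then PMF.pure 0 else (PMF.ofMultiset t h).map (t.erase ·)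

/-- Remove `j` uniformly random elements. -/
noncomputable def dropIter : ℕ → Multiset X → PMF (Multiset X)
  | 0, t => PMF.pure t
  | j + 1, t => (dropIter j t).bind drop1

lemma drop1_support {t u : Multiset X} (h : u ∈ (drop1 t).support) :
    u ≤ t ∧ Multiset.card u = Multiset.card t - 1 := by
  by_cases h0 : t = 0
  · subst h0
    rw [drop1, dif_pos rfl, PMF.support_pure, Set.mem_singleton_iff] at h
    subst h
    exact ⟨le_rfl, by simp⟩
  · rw [drop1, dif_neg h0, PMF.mem_support_map_iff] at h
    obtain ⟨y, hy, hyu⟩ := h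
    rw [PMF.support_ofMultiset] at hy
    simp only [Finset.mem_coe, Multiset.mem_toFinset] at hy
    subst hyu
    exact ⟨Multiset.erase_le y t, Multiset.card_erase_of_mem hy⟩

lemma dropIter_support {j : ℕ} {t u : Multiset X} (h : u ∈ (dropIter j t).support) :
    u ≤ t ∧ Multiset.card u = Multiset.card t - j := by
  induction j generalizing u with
  | zero =>
    rw [dropIter, PMF.support_pure] at h
    simp at h
    simp [h]
  | succ n ih =>
    rw [dropIter, PMF.mem_support_bind_iff] at h
    obtain ⟨v, hv, hu⟩ := h
    obtain ⟨hv1, hv2⟩ := ih hv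
    obtain ⟨hu1, hu2⟩ := drop1_support hu
    exact ⟨hu1.trans hv1, by omega⟩

lemma drop1_singleton (x : X) : drop1 (x ::ₘ (0 : Multiset X)) = PMF.pure 0 := by
  refine eq_pure_of_support_subset _ _ fun u hu => ?_
  obtain ⟨h1, h2⟩ := drop1_support hu
  simp only [Multiset.card_cons, Multiset.card_zero] at h2
  simp [Multiset.card_eq_zero.mp h2]

lemma card_cast_ne_zero (s : Multiset X) (hs : s ≠ 0) :
    (Multiset.card s : ℝ≥0∞) ≠ 0 := by
  simp only [ne_eq, Nat.cast_eq_zero, Multiset.card_eq_zero]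
  exact hs

lemma drop1_apply (s : Multiset X) (hs : s ≠ 0) (u : Multiset X) :
    drop1 s u = ∑' y, (if u = s.erase y then
      ((Multiset.count y s : ℝ≥0∞) / (Multiset.card s : ℝ≥0∞)) else 0) := by
  rw [drop1, dif_neg hs, PMF.map_apply]
  refine tsum_congr fun y => ?_
  by_cases h : u = s.erase y
  · rw [if_pos h, if_pos h, PMF.ofMultiset_apply]
  · rw [if_neg h, if_neg h]

lemma map_cons_apply (x : X) (s : Multiset X) (hs : s ≠ 0) (u : Multiset X) :
    ((drop1 s).map (x ::ₘ ·)) u = ∑' y, (if u = x ::ₘ s.erase y then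
      ((Multiset.count y s : ℝ≥0∞) / (Multiset.card s : ℝ≥0∞)) else 0) := by
  rw [PMF.map_apply]
  by_cases hex : ∃ v, u = x ::ₘ v
  · obtain ⟨v₀, rfl⟩ := hex
    rw [tsum_eq_single v₀ (fun v hv => by
      rw [if_neg]
      intro hcontra
      exact hv ((Multiset.cons_inj_right x).mp hcontra).symm)]
    rw [if_pos rfl, drop1_apply s hs]
    refine tsum_congr fun y => ?_
    have : (x ::ₘ v₀ = x ::ₘ s.erase y) ↔ (v₀ = s.erase y) :=
      Multiset.cons_inj_right x
    by_cases h : v₀ = s.erase y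
    · rw [if_pos h, if_pos (this.mpr h)]
    · rw [if_neg h, if_neg (fun hc => h (this.mp hc))]
  · push_neg at hex
    rw [ENNReal.tsum_eq_zero |>.mpr (fun v => by
      rw [if_neg (hex v)]), ENNReal.tsum_eq_zero |>.mpr (fun y => by
      rw [if_neg (hex (s.erase y))])]

lemma one_sub_inv_succ (c : ℕ) :
    1 - (((c : ℝ≥0∞) + 1))⁻¹ = (c : ℝ≥0∞) * ((c : ℝ≥0∞) + 1)⁻¹ := by
  have hne : ((c : ℝ≥0∞) + 1) ≠ 0 := by simp
  have htop : ((c : ℝ≥0∞) + 1) ≠ ⊤ := by simp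
  have h2 : (1 : ℝ≥0∞) = (c : ℝ≥0∞) * ((c : ℝ≥0∞) + 1)⁻¹ + ((c : ℝ≥0∞) + 1)⁻¹ := by
    calc (1 : ℝ≥0∞) = ((c : ℝ≥0∞) + 1) * ((c : ℝ≥0∞) + 1)⁻¹ :=
          (ENNReal.mul_inv_cancel hne htop).symm
      _ = (c : ℝ≥0∞) * ((c : ℝ≥0∞) + 1)⁻¹ + ((c : ℝ≥0∞) + 1)⁻¹ := by ring
  exact ENNReal.sub_eq_of_eq_add (ENNReal.inv_ne_top.mpr hne) h2

/-- `drop1` on `x ::ₘ s` is a mixture: with prob `1/(c+1)` remove `x`, else remove from `s`. -/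
lemma drop1_cons (x : X) (s : Multiset X) (hs : s ≠ 0) :
    drop1 (x ::ₘ s) = (PMF.bernoulliE (((Multiset.card s : ℝ≥0∞) + 1))⁻¹ (by
        rw [ENNReal.inv_le_one]
        exact le_add_self)).bind
      (fun b => if b then PMF.pure s else (drop1 s).map (x ::ₘ ·)) := by
  have hc0 : (Multiset.card s : ℝ≥0∞) ≠ 0 := card_cast_ne_zero s hs
  have hctop : (Multiset.card s : ℝ≥0∞) ≠ ⊤ := by simp
  set cE : ℝ≥0∞ := (Multiset.card s : ℝ≥0∞) with hcE
  have hcons0 : (x ::ₘ s) ≠ 0 := Multiset.cons_ne_zero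
  have hscal : ∀ a : ℝ≥0∞, (1 - (cE + 1)⁻¹) * (a / cE) = a / (cE + 1) := by
    intro a
    rw [one_sub_inv_succ]
    rw [div_eq_mul_inv, div_eq_mul_inv]
    calc cE * (cE + 1)⁻¹ * (a * cE⁻¹) = a * (cE + 1)⁻¹ * (cE * cE⁻¹) := by ring
      _ = a * (cE + 1)⁻¹ := by rw [ENNReal.mul_inv_cancel hc0 hctop, mul_one]
  ext u
  rw [PMF.bind_apply, tsum_bool, drop1_apply _ hcons0]
  simp only [PMF.bernoulliE_apply, cond_true, cond_false, if_true,
    Bool.false_eq_true, if_false]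
  rw [map_cons_apply x s hs]
  rw [← ENNReal.tsum_mul_left]
  -- split LHS at y = x
  rw [ENNReal.tsum_eq_add_tsum_ite x]
  -- split RHS sum at y = x
  rw [ENNReal.tsum_eq_add_tsum_ite x (f := fun y =>
    (1 - (cE + 1)⁻¹) * (if u = x ::ₘ s.erase y then (Multiset.count y s : ℝ≥0∞) / cE else 0))]
  have hcard : (Multiset.card (x ::ₘ s) : ℝ≥0∞) = cE + 1 := by
    rw [Multiset.card_cons]; push_cast; rfl
  have htail : ∀ y, (if y = x then 0 else
        (if u = (x ::ₘ s).erase y then ((Multiset.count y (x ::ₘ s) : ℝ≥0∞)) / (Multiset.card (x ::ₘ s) : ℝ≥0∞) else 0))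
      = (if y = x then 0 else (1 - (cE + 1)⁻¹) *
        (if u = x ::ₘ s.erase y then (Multiset.count y s : ℝ≥0∞) / cE else 0)) := by
    intro y
    by_cases hy : y = x
    · rw [if_pos hy, if_pos hy]
    · rw [if_neg hy, if_neg hy]
      rw [Multiset.erase_cons_tail s (fun hc => hy hc.symm),
        Multiset.count_cons_of_ne hy, hcard]
      by_cases hcond : u = x ::ₘ s.erase y
      · rw [if_pos hcond, if_pos hcond, hscal]
      · rw [if_neg hcond, if_neg hcond, mul_zero]
  have hhead : (if u = (x ::ₘ s).erase x then
        ((Multiset.count x (x ::ₘ s) : ℝ≥0∞)) / (Multiset.card (x ::ₘ s) : ℝ≥0∞) else 0)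
      = (cE + 1)⁻¹ * (PMF.pure s) u + (1 - (cE + 1)⁻¹) *
        (if u = x ::ₘ s.erase x then (Multiset.count x s : ℝ≥0∞) / cE else 0) := by
    rw [Multiset.erase_cons_head, Multiset.count_cons_self, hcard, PMF.pure_apply]
    by_cases hus : u = s
    · rw [if_pos hus, if_pos hus]
      by_cases hx : x ∈ s
      · rw [if_pos (by rw [hus]; exact (Multiset.cons_erase hx).symm), hscal, mul_one]
        push_cast
        rw [← ENNReal.div_add_div_same, one_div]
        exact add_comm _ _
      · rw [if_neg (by
          intro hcontra
          rw [Multiset.erase_of_notMem hx] at hcontra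
          rw [hus] at hcontra
          have := congrArg Multiset.card hcontra
          simp at this)]
        rw [Multiset.count_eq_zero.mpr hx, mul_zero, add_zero, mul_one]
        push_cast
        simp [one_div]
    · rw [if_neg hus, if_neg hus, mul_zero, zero_add]
      by_cases hcond : u = x ::ₘ s.erase x
      · have hx : x ∉ s := by
          intro hx
          rw [Multiset.cons_erase hx] at hcond
          exact hus hcond
        rw [if_pos hcond, Multiset.count_eq_zero.mpr hx]
        norm_num
      · rw [if_neg hcond, mul_zero]
  rw [tsum_congr htail, hhead, add_assoc]
  exact add_comm _ _

end StmtAux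
namespace StmtAux

variable {X : Type*}

lemma iid_one (q : PMF X) : iid q 1 = q.map (· ::ₘ 0) := by
  rw [iid_succ, iid_zero, PMF.pure_bind]

/-- Removing a uniformly random element from an i.i.d. sample of size `k+1`
gives an i.i.d. sample of size `k`. -/
lemma iid_bind_drop1 (q : PMF X) : ∀ k, (iid q (k + 1)).bind drop1 = iid q k := by
  intro k
  induction k with
  | zero =>
    rw [iid_one, PMF.bind_map]
    have : drop1 ∘ (fun x : X => x ::ₘ 0) = fun _ => PMF.pure (0 : Multiset X) := by
      funext x; exact drop1_singleton x
    rw [this, PMF.bind_const, iid_zero]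
  | succ k ih =>
    have hθ : ((((k + 1 : ℕ) : ℝ≥0∞)) + 1)⁻¹ ≤ 1 := by
      rw [ENNReal.inv_le_one]; exact le_add_self
    set coin := PMF.bernoulliE ((((k + 1 : ℕ) : ℝ≥0∞)) + 1)⁻¹ hθ with hcoin
    have h1 : (iid q (k + 1 + 1)).bind drop1
        = (iid q (k + 1)).bind (fun s => q.bind (fun x => drop1 (x ::ₘ s))) := by
      rw [iid_succ, PMF.bind_bind]
      refine bind_congr' _ _ _ fun s _ => ?_
      rw [PMF.bind_map]
      rfl
    rw [h1]
    have h2 : (iid q (k + 1)).bind (fun s => q.bind (fun x => drop1 (x ::ₘ s)))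
        = (iid q (k + 1)).bind (fun s => q.bind (fun x => coin.bind
            (fun b => if b then PMF.pure s else (drop1 s).map (x ::ₘ ·)))) := by
      refine bind_congr' _ _ _ fun s hs => ?_
      have hcard : Multiset.card s = k + 1 := iid_support_card q (k + 1) hs
      have hs0 : s ≠ 0 := by
        intro h0; rw [h0] at hcard; simp at hcard
      have : ∀ x : X, drop1 (x ::ₘ s) = coin.bind
          (fun b => if b then PMF.pure s else (drop1 s).map (x ::ₘ ·)) := by
        intro x
        rw [drop1_cons x s hs0]
        congr 1
        rw [hcard]
      exact congrArg _ (funext this)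
    rw [h2]
    have h3 : ∀ s : Multiset X, q.bind (fun x => coin.bind
          (fun b => if b then PMF.pure s else (drop1 s).map (x ::ₘ ·)))
        = coin.bind (fun b => if b then PMF.pure s
            else (drop1 s).bind (fun v => q.map (· ::ₘ v))) := by
      intro s
      rw [PMF.bind_comm q coin]
      congr 1
      funext b
      cases b
      · simp only [Bool.false_eq_true, if_false]
        have : ∀ x : X, (drop1 s).map (x ::ₘ ·) = (drop1 s).bind (fun v => PMF.pure (x ::ₘ v)) := by
          intro x; rfl
        calc q.bind (fun x => (drop1 s).map (x ::ₘ ·))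
            = q.bind (fun x => (drop1 s).bind (fun v => PMF.pure (x ::ₘ v))) := by
              exact congrArg _ (funext this)
          _ = (drop1 s).bind (fun v => q.bind (fun x => PMF.pure (x ::ₘ v))) :=
              PMF.bind_comm q (drop1 s) _
          _ = (drop1 s).bind (fun v => q.map (· ::ₘ v)) := rfl
      · simp only [if_true]
        exact PMF.bind_const q (PMF.pure s)
    have h4 : (iid q (k + 1)).bind (fun s => q.bind (fun x => coin.bind
          (fun b => if b then PMF.pure s else (drop1 s).map (x ::ₘ ·))))
        = coin.bind (fun b => if b then iid q (k + 1)
            else ((iid q (k + 1)).bind drop1).bind (fun v => q.map (· ::ₘ v))) := by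
      calc (iid q (k + 1)).bind (fun s => q.bind (fun x => coin.bind
              (fun b => if b then PMF.pure s else (drop1 s).map (x ::ₘ ·))))
          = (iid q (k + 1)).bind (fun s => coin.bind (fun b => if b then PMF.pure s
              else (drop1 s).bind (fun v => q.map (· ::ₘ v)))) := by
            exact congrArg _ (funext h3)
        _ = coin.bind (fun b => (iid q (k + 1)).bind (fun s => if b then PMF.pure s
              else (drop1 s).bind (fun v => q.map (· ::ₘ v)))) :=
            PMF.bind_comm (iid q (k + 1)) coin _
        _ = coin.bind (fun b => if b then iid q (k + 1)
              else ((iid q (k + 1)).bind drop1).bind (fun v => q.map (· ::ₘ v))) := by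
            congr 1
            funext b
            cases b
            · simp only [Bool.false_eq_true, if_false]
              rw [PMF.bind_bind]
            · simp only [if_true]
              exact PMF.bind_pure _
    rw [h4, ih]
    have : ∀ b : Bool, (if b then iid q (k + 1)
        else (iid q k).bind (fun v => q.map (· ::ₘ v))) = iid q (k + 1) := by
      intro b
      cases b
      · simp only [Bool.false_eq_true, if_false]
        rw [← iid_succ]
      · simp only [if_true]
    rw [show (fun b : Bool => if b then iid q (k + 1)
        else (iid q k).bind (fun v => q.map (· ::ₘ v))) = fun _ => iid q (k + 1) from funext this]
    exact PMF.bind_const _ _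

lemma iid_bind_dropIter (q : PMF X) (m j : ℕ) (h : j ≤ m) :
    (iid q m).bind (dropIter j) = iid q (m - j) := by
  induction j with
  | zero =>
    simp only [dropIter, Nat.sub_zero]
    exact PMF.bind_pure _
  | succ j ih =>
    have hj : j ≤ m := by omega
    have : (iid q m).bind (dropIter (j + 1))
        = ((iid q m).bind (dropIter j)).bind drop1 := by
      rw [PMF.bind_bind]; rfl
    rw [this, ih hj]
    have hmj : m - j = (m - (j + 1)) + 1 := by omega
    rw [hmj, iid_bind_drop1]

end StmtAux
namespace StmtAux

variable {X : Type*}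

section Thin

variable (w : X → ℝ≥0∞) (hw : ∀ x, w x ≤ 1)

/-- One thinning step: keep `x` with probability `w x`. -/
noncomputable def thinStep (x : X) (μ : PMF (Multiset X)) : PMF (Multiset X) :=
  μ.bind fun t => (PMF.bernoulliE (w x) (hw x)).map (fun b => if b then x ::ₘ t else t)

lemma thinStep_comm (x y : X) (μ : PMF (Multiset X)) :
    thinStep w hw x (thinStep w hw y μ) = thinStep w hw y (thinStep w hw x μ) := by
  have key : ∀ (x y : X) (t : Multiset X),
      ((PMF.bernoulliE (w y) (hw y)).map (fun b => if b then y ::ₘ t else t)).bind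
        (fun u => (PMF.bernoulliE (w x) (hw x)).map (fun b => if b then x ::ₘ u else u))
      = ((PMF.bernoulliE (w x) (hw x)).map (fun b => if b then x ::ₘ t else t)).bind
        (fun u => (PMF.bernoulliE (w y) (hw y)).map (fun b => if b then y ::ₘ u else u)) := by
    intro x y t
    rw [PMF.bind_map, PMF.bind_map]
    have hpt : ∀ (b2 b1 : Bool),
        (if b1 then x ::ₘ (if b2 then y ::ₘ t else t) else (if b2 then y ::ₘ t else t))
        = (if b2 then y ::ₘ (if b1 then x ::ₘ t else t) else (if b1 then x ::ₘ t else t)) := by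
      intro b2 b1
      cases b1 <;> cases b2 <;> simp [Multiset.cons_swap]
    calc (PMF.bernoulliE (w y) (hw y)).bind (fun b2 =>
            (PMF.bernoulliE (w x) (hw x)).map (fun b1 =>
              if b1 then x ::ₘ (if b2 then y ::ₘ t else t) else (if b2 then y ::ₘ t else t)))
        = (PMF.bernoulliE (w y) (hw y)).bind (fun b2 =>
            (PMF.bernoulliE (w x) (hw x)).bind (fun b1 => PMF.pure
              (if b2 then y ::ₘ (if b1 then x ::ₘ t else t) else (if b1 then x ::ₘ t else t)))) := by
          refine congrArg _ (funext fun b2 => ?_)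
          refine congrArg _ (funext fun b1 => ?_)
          simp only [Function.comp_apply]
          rw [hpt b2 b1]
      _ = (PMF.bernoulliE (w x) (hw x)).bind (fun b1 =>
            (PMF.bernoulliE (w y) (hw y)).bind (fun b2 => PMF.pure
              (if b2 then y ::ₘ (if b1 then x ::ₘ t else t) else (if b1 then x ::ₘ t else t)))) :=
          PMF.bind_comm _ _ _
      _ = (PMF.bernoulliE (w x) (hw x)).bind (fun b1 =>
            (PMF.bernoulliE (w y) (hw y)).map (fun b2 =>
              if b2 then y ::ₘ (if b1 then x ::ₘ t else t) else (if b1 then x ::ₘ t else t))) := rfl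
  rw [thinStep, thinStep, thinStep, thinStep, PMF.bind_bind, PMF.bind_bind]
  exact congrArg _ (funext fun t => key x y t)

/-- Thinning of a list. -/
noncomputable def thinL : List X → PMF (Multiset X)
  | [] => PMF.pure 0
  | x :: l => thinStep w hw x (thinL l)

lemma thinL_perm : ∀ {l1 l2 : List X}, l1.Perm l2 → thinL w hw l1 = thinL w hw l2 := by
  intro l1 l2 hp
  induction hp with
  | nil => rfl
  | cons x _ ih => simp only [thinL, ih]
  | swap x y l => exact thinStep_comm w hw y x (thinL w hw l)
  | trans _ _ ih1 ih2 => rw [ih1, ih2]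

/-- Thinning of a multiset: keep each element `x` independently with probability `w x`. -/
noncomputable def thin (s : Multiset X) : PMF (Multiset X) :=
  Quotient.liftOn s (thinL w hw) fun _ _ hp => thinL_perm w hw hp

lemma thin_zero : thin w hw 0 = PMF.pure 0 := rfl

lemma thin_cons (x : X) (s : Multiset X) :
    thin w hw (x ::ₘ s) = thinStep w hw x (thin w hw s) := by
  induction s using Quotient.inductionOn with
  | h l => rfl

lemma thin_support {s t : Multiset X} (h : t ∈ (thin w hw s).support) : t ≤ s := by
  induction s using Multiset.induction_on generalizing t with
  | empty =>
    rw [thin_zero, PMF.support_pure, Set.mem_singleton_iff] at h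
    simp [h]
  | cons x s ih =>
    rw [thin_cons, thinStep, PMF.mem_support_bind_iff] at h
    obtain ⟨u, hu, ht⟩ := h
    rw [PMF.mem_support_map_iff] at ht
    obtain ⟨b, _, hb⟩ := ht
    have hus := ih hu
    cases b
    · simp only [Bool.false_eq_true, if_false] at hb
      subst hb
      exact hus.trans (Multiset.le_cons_self s x)
    · simp only [if_true] at hb
      subst hb
      exact Multiset.cons_le_cons x hus

end Thin

end StmtAux
namespace StmtAux

variable {X : Type*}

section Mix

variable (p' : PMF X) (e1 : ℝ≥0∞) (he1 : e1 ≤ 1)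

/-- One step of the "thinned i.i.d." process: with probability `e1` add a fresh draw
from `p'`, otherwise do nothing. -/
noncomputable def mixStep (t : Multiset X) : PMF (Multiset X) :=
  (PMF.bernoulliE e1 he1).bind fun b => if b then p'.map (· ::ₘ t) else PMF.pure t

/-- The thinned i.i.d. sample process. -/
noncomputable def thinIid : ℕ → PMF (Multiset X)
  | 0 => PMF.pure 0
  | n + 1 => (thinIid n).bind (mixStep p' e1 he1)

/-- The count process: size of the thinned sample. -/
noncomputable def Nb : ℕ → PMF ℕ
  | 0 => PMF.pure 0
  | n + 1 => (Nb n).bind fun k =>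
      (PMF.bernoulliE e1 he1).map (fun b => if b then k + 1 else k)

end Mix

section Decomp

variable (p p' r : PMF X) (e1 e2 : ℝ≥0∞)

lemma he1_le (he : e1 + e2 = 1) : e1 ≤ 1 := he ▸ le_add_right le_rfl

/-- The keeping probability for the thinning adversary. -/
noncomputable def keepW (x : X) : ℝ≥0∞ :=
  if p x = 0 then 0 else e1 * p' x / p x

lemma keepW_le_one (hdec : ∀ x, p x = e1 * p' x + e2 * r x) :
    ∀ x, keepW p p' e1 x ≤ 1 := by
  intro x
  rw [keepW]
  by_cases h : p x = 0
  · rw [if_pos h]; exact zero_le_one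
  · rw [if_neg h]
    rw [ENNReal.div_le_iff h (PMF.apply_ne_top p x), one_mul]
    calc e1 * p' x ≤ e1 * p' x + e2 * r x := le_add_right le_rfl
      _ = p x := (hdec x).symm

lemma keepW_mul (hdec : ∀ x, p x = e1 * p' x + e2 * r x) (x : X) :
    p x * keepW p p' e1 x = e1 * p' x := by
  rw [keepW]
  by_cases h : p x = 0
  · rw [if_pos h, mul_zero]
    have : e1 * p' x ≤ p x := (hdec x) ▸ le_add_right le_rfl
    rw [h] at this
    exact (le_antisymm this zero_le).symm ▸ rfl
  · rw [if_neg h]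
    exact ENNReal.mul_div_cancel h (PMF.apply_ne_top p x)

lemma keepW_mul_compl (hdec : ∀ x, p x = e1 * p' x + e2 * r x) (x : X) :
    p x * (1 - keepW p p' e1 x) = e2 * r x := by
  have hptop := PMF.apply_ne_top p x
  rw [ENNReal.mul_sub (fun _ _ => hptop), mul_one, keepW_mul p p' r e1 e2 hdec x, hdec x]
  have hfin : e1 * p' x ≠ ⊤ := by
    refine ne_top_of_le_ne_top hptop ?_
    exact (hdec x) ▸ le_add_right le_rfl
  rw [ENNReal.add_sub_cancel_left hfin]

lemma one_sub_e1 (he : e1 + e2 = 1) : 1 - e1 = e2 := by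
  have h1 : e1 ≠ ⊤ := ne_top_of_le_ne_top ENNReal.one_ne_top (he1_le e1 e2 he)
  rw [← he, ENNReal.add_sub_cancel_left h1]

open scoped Classical in
lemma map_bool_apply {γ : Type*} (μ : PMF Bool) (A B : γ) (u : γ) :
    (μ.map (fun b => if b then A else B)) u
      = (if u = B then μ false else 0) + (if u = A then μ true else 0) := by
  rw [PMF.map_apply, tsum_bool]
  rfl

/-- Key step: a `p`-draw thinned with `keepW` behaves as: w.p. `e1` a fresh `p'` point,
w.p. `e2` nothing. -/
lemma keyStep (he : e1 + e2 = 1) (hdec : ∀ x, p x = e1 * p' x + e2 * r x) (t : Multiset X) :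
    p.bind (fun x => (PMF.bernoulliE (keepW p p' e1 x) (keepW_le_one p p' r e1 e2 hdec x)).map
      (fun b => if b then x ::ₘ t else t))
    = mixStep p' e1 (he1_le e1 e2 he) t := by
  classical
  ext u
  have hterm : ∀ x : X, p x * ((PMF.bernoulliE (keepW p p' e1 x)
        (keepW_le_one p p' r e1 e2 hdec x)).map (fun b => if b then x ::ₘ t else t)) u
      = (if u = t then e2 * r x else 0) + (if u = x ::ₘ t then e1 * p' x else 0) := by
    intro x
    rw [map_bool_apply]
    simp only [PMF.bernoulliE_apply, cond_true, cond_false]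
    rw [mul_add]
    congr 1
    · by_cases hu : u = t
      · rw [if_pos hu, if_pos hu, keepW_mul_compl p p' r e1 e2 hdec x]
      · rw [if_neg hu, if_neg hu, mul_zero]
    · by_cases hu : u = x ::ₘ t
      · rw [if_pos hu, if_pos hu, keepW_mul p p' r e1 e2 hdec x]
      · rw [if_neg hu, if_neg hu, mul_zero]
  have h1 : ∑' x : X, (if u = t then e2 * r x else 0) = (1 - e1) * (PMF.pure t) u := by
    rw [PMF.pure_apply, one_sub_e1 e1 e2 he]
    by_cases hu : u = t
    · simp only [if_pos hu]
      rw [ENNReal.tsum_mul_left, r.tsum_coe]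
    · simp only [if_neg hu]
      simp
  have h2 : ∑' x : X, (if u = x ::ₘ t then e1 * p' x else 0)
      = e1 * (p'.map (· ::ₘ t)) u := by
    rw [PMF.map_apply, ← ENNReal.tsum_mul_left]
    refine tsum_congr fun x => ?_
    by_cases hu : u = x ::ₘ t
    · rw [if_pos hu, if_pos hu]
    · rw [if_neg hu, if_neg hu, mul_zero]
  have hR : (mixStep p' e1 (he1_le e1 e2 he) t) u
      = (1 - e1) * (PMF.pure t) u + e1 * (p'.map (· ::ₘ t)) u := by
    show ((PMF.bernoulliE e1 (he1_le e1 e2 he)).bind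
      fun b => if b then p'.map (· ::ₘ t) else PMF.pure t) u = _
    rw [PMF.bind_apply, tsum_bool]
    simp only [PMF.bernoulliE_apply, cond_true, cond_false]
    rfl
  rw [PMF.bind_apply, tsum_congr hterm, ENNReal.tsum_add, h1, h2, hR]

/-- The thinned i.i.d. sample from `p` is the thinned process. -/
lemma iid_bind_thin (he : e1 + e2 = 1) (hdec : ∀ x, p x = e1 * p' x + e2 * r x) (m : ℕ) :
    (iid p m).bind (thin (keepW p p' e1) (keepW_le_one p p' r e1 e2 hdec))
      = thinIid p' e1 (he1_le e1 e2 he) m := by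
  induction m with
  | zero =>
    rw [iid_zero, PMF.pure_bind, thin_zero, thinIid]
  | succ n ih =>
    rw [iid_succ, PMF.bind_bind]
    have hinner : ∀ s : Multiset X,
        (p.map (· ::ₘ s)).bind (thin (keepW p p' e1) (keepW_le_one p p' r e1 e2 hdec))
        = (thin (keepW p p' e1) (keepW_le_one p p' r e1 e2 hdec) s).bind
            (mixStep p' e1 (he1_le e1 e2 he)) := by
      intro s
      rw [PMF.bind_map]
      have : ∀ x : X, (thin (keepW p p' e1) (keepW_le_one p p' r e1 e2 hdec) ∘ (· ::ₘ s)) x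
          = (thin (keepW p p' e1) (keepW_le_one p p' r e1 e2 hdec) s).bind
              (fun t => (PMF.bernoulliE (keepW p p' e1 x) (keepW_le_one p p' r e1 e2 hdec x)).map
                (fun b => if b then x ::ₘ t else t)) := by
        intro x
        simp only [Function.comp_apply]
        rw [thin_cons]
        rfl
      rw [show (thin (keepW p p' e1) (keepW_le_one p p' r e1 e2 hdec) ∘ (· ::ₘ s)) = _ from funext this]
      rw [PMF.bind_comm]
      refine congrArg _ (funext fun t => ?_)
      exact keyStep p p' r e1 e2 he hdec t
    rw [show (fun s => (p.map (· ::ₘ s)).bind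
        (thin (keepW p p' e1) (keepW_le_one p p' r e1 e2 hdec))) = _ from funext hinner]
    rw [← PMF.bind_bind, ih]
    rfl

end Decomp

section MixIid

variable (p' : PMF X) (e1 : ℝ≥0∞) (he1 : e1 ≤ 1)

/-- The thinned process is a binomial mixture of i.i.d. samples from `p'`. -/
lemma thinIid_eq_mixture (m : ℕ) :
    thinIid p' e1 he1 m = (Nb e1 he1 m).bind (fun k => iid p' k) := by
  induction m with
  | zero =>
    rw [thinIid, Nb, PMF.pure_bind, iid_zero]
  | succ n ih =>
    rw [thinIid, ih, PMF.bind_bind]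
    have hstep : ∀ k : ℕ, (iid p' k).bind (mixStep p' e1 he1)
        = (PMF.bernoulliE e1 he1).bind (fun b => iid p' (if b then k + 1 else k)) := by
      intro k
      have h0 : (iid p' k).bind (mixStep p' e1 he1)
          = (iid p' k).bind (fun t => (PMF.bernoulliE e1 he1).bind
              (fun b => if b then p'.map (· ::ₘ t) else PMF.pure t)) := rfl
      rw [h0, PMF.bind_comm]
      refine congrArg _ (funext fun b => ?_)
      cases b
      · simp only [Bool.false_eq_true, if_false]
        exact PMF.bind_pure _
      · simp only [if_true]
        rw [← iid_succ]
    rw [show (fun k => (iid p' k).bind (mixStep p' e1 he1)) = _ from funext hstep]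
    show _ = ((Nb e1 he1 n).bind fun k =>
        (PMF.bernoulliE e1 he1).map (fun b => if b then k + 1 else k)).bind (fun k => iid p' k)
    rw [PMF.bind_bind]
    refine congrArg _ (funext fun k => ?_)
    rw [PMF.bind_map]
    rfl

end MixIid

end StmtAux
namespace StmtAux

variable {X : Type*} {β : Type*} {γ : Type*}

lemma tsum_pure (a : β) (g : β → ℝ≥0∞) : ∑' j, (PMF.pure a) j * g j = g a := by
  rw [tsum_eq_single a (fun b hb => by
    rw [PMF.pure_apply, if_neg hb, zero_mul])]
  rw [PMF.pure_apply, if_pos rfl, one_mul]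

lemma tsum_map (μ : PMF β) (h : β → γ) (g : γ → ℝ≥0∞) :
    ∑' j, (μ.map h) j * g j = ∑' b, μ b * g (h b) := by
  show ∑' j, (μ.bind (fun b => PMF.pure (h b))) j * g j = _
  rw [tsum_bind]
  exact tsum_congr fun b => by rw [tsum_pure]

section NbMoments

variable (qr : ℝ)

lemma ofReal_le_one' (hqr1 : qr ≤ 1) : ENNReal.ofReal qr ≤ 1 := by
  rw [← ENNReal.ofReal_one]
  exact ENNReal.ofReal_le_ofReal hqr1

lemma Nb_exp_succ (he1 : ENNReal.ofReal qr ≤ 1) (n : ℕ) (g : ℕ → ℝ≥0∞) :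
    ∑' j, (Nb (ENNReal.ofReal qr) he1 (n + 1)) j * g j
      = ∑' k, (Nb (ENNReal.ofReal qr) he1 n) k *
          (ENNReal.ofReal qr * g (k + 1) + (1 - ENNReal.ofReal qr) * g k) := by
  show ∑' j, ((Nb (ENNReal.ofReal qr) he1 n).bind fun k =>
      (PMF.bernoulliE _ he1).map (fun b => if b then k + 1 else k)) j * g j = _
  rw [tsum_bind]
  refine tsum_congr fun k => ?_
  congr 1
  rw [tsum_map, tsum_bool]
  simp only [PMF.bernoulliE_apply, cond_true, cond_false, if_true, Bool.false_eq_true, if_false]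
  exact add_comm _ _

lemma one_sub_ofReal (he1 : ENNReal.ofReal qr ≤ 1) (h0 : 0 ≤ qr) :
    1 - ENNReal.ofReal qr = ENNReal.ofReal (1 - qr) := by
  rw [ENNReal.ofReal_sub _ h0, ENNReal.ofReal_one]

lemma Nb_variance (h0 : 0 ≤ qr) (h1 : qr ≤ 1) (he1 : ENNReal.ofReal qr ≤ 1) :
    ∀ m : ℕ, ∑' k : ℕ, (Nb (ENNReal.ofReal qr) he1 m) k *
        ENNReal.ofReal (((k : ℝ) - qr * m) ^ 2)
      = (m : ℝ≥0∞) * ENNReal.ofReal (qr * (1 - qr)) := by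
  intro m
  induction m with
  | zero =>
    rw [show (Nb (ENNReal.ofReal qr) he1 0) = PMF.pure 0 from rfl, tsum_pure]
    norm_num
  | succ n ih =>
    have hpt : ∀ k : ℕ,
        ENNReal.ofReal qr * ENNReal.ofReal ((((k + 1 : ℕ) : ℝ) - qr * ((n : ℝ) + 1)) ^ 2)
          + (1 - ENNReal.ofReal qr) * ENNReal.ofReal (((k : ℝ) - qr * ((n : ℝ) + 1)) ^ 2)
        = ENNReal.ofReal (((k : ℝ) - qr * n) ^ 2) + ENNReal.ofReal (qr * (1 - qr)) := by
      intro k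
      have hn1 : (0:ℝ) ≤ qr * ((((k + 1 : ℕ) : ℝ) - qr * ((n : ℝ) + 1)) ^ 2) :=
        mul_nonneg h0 (sq_nonneg _)
      have hn2 : (0:ℝ) ≤ (1 - qr) * ((((k : ℕ) : ℝ) - qr * ((n : ℝ) + 1)) ^ 2) :=
        mul_nonneg (by linarith) (sq_nonneg _)
      rw [one_sub_ofReal qr he1 h0]
      rw [← ENNReal.ofReal_mul h0, ← ENNReal.ofReal_mul (by linarith : (0:ℝ) ≤ 1 - qr)]
      rw [← ENNReal.ofReal_add hn1 hn2]
      rw [← ENNReal.ofReal_add (sq_nonneg _) (mul_nonneg h0 (by linarith))]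
      congr 1
      push_cast
      ring
    push_cast
    rw [Nb_exp_succ qr he1 n (fun k => ENNReal.ofReal (((k : ℝ) - qr * ((n : ℝ) + 1)) ^ 2))]
    have hsum : ∑' k, (Nb (ENNReal.ofReal qr) he1 n) k *
        (ENNReal.ofReal qr * ENNReal.ofReal ((((k + 1 : ℕ) : ℝ) - qr * ((n : ℝ) + 1)) ^ 2)
          + (1 - ENNReal.ofReal qr) * ENNReal.ofReal (((k : ℝ) - qr * ((n : ℝ) + 1)) ^ 2))
        = ∑' k, ((Nb (ENNReal.ofReal qr) he1 n) k * ENNReal.ofReal (((k : ℝ) - qr * n) ^ 2)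
            + (Nb (ENNReal.ofReal qr) he1 n) k * ENNReal.ofReal (qr * (1 - qr))) :=
      tsum_congr fun k => by rw [hpt k, mul_add]
    rw [hsum, ENNReal.tsum_add, ih, ENNReal.tsum_mul_right,
      (Nb (ENNReal.ofReal qr) he1 n).tsum_coe, one_mul]
    ring

lemma Nb_tail (h0 : 0 ≤ qr) (h1 : qr ≤ 1) (he1 : ENNReal.ofReal qr ≤ 1)
    (m n : ℕ) (a : ℝ) (ha : 0 < a)
    (hbad : ∀ k : ℕ, k < n → (k : ℝ) ≤ qr * m - a) :
    probEvent (Nb (ENNReal.ofReal qr) he1 m) {k | k < n}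
      ≤ ENNReal.ofReal ((m : ℝ) / (4 * a ^ 2)) := by
  have ha2pos : (0:ℝ) < a ^ 2 := by positivity
  have hanz : ENNReal.ofReal (a ^ 2) ≠ 0 := (ENNReal.ofReal_pos.mpr ha2pos).ne'
  have hant : ENNReal.ofReal (a ^ 2) ≠ ⊤ := ENNReal.ofReal_ne_top
  have hpoint : ∀ k : ℕ, ({k | k < n} : Set ℕ).indicator (⇑(Nb (ENNReal.ofReal qr) he1 m)) k
      ≤ ((Nb (ENNReal.ofReal qr) he1 m) k * ENNReal.ofReal (((k:ℝ) - qr * m) ^ 2))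
        * (ENNReal.ofReal (a ^ 2))⁻¹ := by
    intro k
    by_cases hk : k < n
    · rw [Set.indicator_of_mem (show k ∈ {k | k < n} from hk)]
      have hsq : a ^ 2 ≤ ((k:ℝ) - qr * m) ^ 2 := by
        have hb := hbad k hk
        nlinarith [hb, ha]
      have h1le : (1 : ℝ≥0∞) ≤ ENNReal.ofReal (((k:ℝ) - qr * m) ^ 2)
          * (ENNReal.ofReal (a ^ 2))⁻¹ := by
        rw [← div_eq_mul_inv]
        rw [ENNReal.le_div_iff_mul_le (Or.inl hanz) (Or.inl hant), one_mul]
        exact ENNReal.ofReal_le_ofReal hsq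
      calc (Nb (ENNReal.ofReal qr) he1 m) k
          = (Nb (ENNReal.ofReal qr) he1 m) k * 1 := (mul_one _).symm
        _ ≤ (Nb (ENNReal.ofReal qr) he1 m) k * (ENNReal.ofReal (((k:ℝ) - qr * m) ^ 2)
            * (ENNReal.ofReal (a ^ 2))⁻¹) := mul_le_mul_right h1le _
        _ = ((Nb (ENNReal.ofReal qr) he1 m) k * ENNReal.ofReal (((k:ℝ) - qr * m) ^ 2))
            * (ENNReal.ofReal (a ^ 2))⁻¹ := (mul_assoc _ _ _).symm
    · rw [Set.indicator_of_notMem (show k ∉ {k | k < n} from hk)]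
      exact zero_le
  calc probEvent (Nb (ENNReal.ofReal qr) he1 m) {k | k < n}
      = ∑' k, ({k | k < n} : Set ℕ).indicator (⇑(Nb (ENNReal.ofReal qr) he1 m)) k :=
        pe_def _ _
    _ ≤ ∑' k, ((Nb (ENNReal.ofReal qr) he1 m) k * ENNReal.ofReal (((k:ℝ) - qr * m) ^ 2))
        * (ENNReal.ofReal (a ^ 2))⁻¹ := ENNReal.tsum_le_tsum hpoint
    _ = ((m : ℝ≥0∞) * ENNReal.ofReal (qr * (1 - qr))) * (ENNReal.ofReal (a ^ 2))⁻¹ := by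
        rw [ENNReal.tsum_mul_right, Nb_variance qr h0 h1 he1 m]
    _ ≤ ((m : ℝ≥0∞) * ENNReal.ofReal (1/4)) * (ENNReal.ofReal (a ^ 2))⁻¹ := by
        refine mul_le_mul_left (mul_le_mul_right (ENNReal.ofReal_le_ofReal ?_) _) _
        nlinarith [sq_nonneg (qr - 1/2)]
    _ = ENNReal.ofReal ((m : ℝ) / (4 * a ^ 2)) := by
        rw [← ENNReal.ofReal_natCast m, ← ENNReal.ofReal_mul (by positivity)]
        rw [← div_eq_mul_inv, ← ENNReal.ofReal_div_of_pos ha2pos]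
        congr 1
        field_simp


end NbMoments

end StmtAux
namespace StmtAux

variable {X : Type*} {β : Type*}

/-! ### more probEvent lemmas -/

lemma pe_of_support_subset (μ : PMF β) (E : Set β) (h : μ.support ⊆ E) :
    probEvent μ E = 1 := by
  rw [pe_def, ← μ.tsum_coe]
  refine tsum_congr fun x => ?_
  by_cases hx : μ x = 0
  · by_cases hE : x ∈ E
    · rw [Set.indicator_of_mem hE]
    · rw [Set.indicator_of_notMem hE, hx]
  · exact Set.indicator_of_mem (h (by simpa [PMF.mem_support_iff] using hx)) _

/-! ### the counting function -/

/-- Number of points the adversary keeps out of `k`. -/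
noncomputable def cFn (η : ℝ) (k : ℕ) : ℕ := k - ⌊η * k⌋₊

lemma cFn_floor_le (η : ℝ) (hη0 : 0 ≤ η) (hη1 : η < 1) (k : ℕ) : ⌊η * k⌋₊ ≤ k := by
  calc ⌊η * k⌋₊ ≤ ⌊(k : ℝ)⌋₊ := Nat.floor_le_floor (by nlinarith [Nat.cast_nonneg (α := ℝ) k])
    _ = k := Nat.floor_natCast k

lemma cFn_budget (η : ℝ) (hη0 : 0 ≤ η) (hη1 : η < 1) (m : ℕ) :
    η * m - 1 < (m : ℝ) - cFn η m ∧ (m : ℝ) - cFn η m ≤ η * m := by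
  have hle := cFn_floor_le η hη0 hη1 m
  have hcast : (m : ℝ) - cFn η m = (⌊η * m⌋₊ : ℝ) := by
    rw [cFn, Nat.cast_sub hle]
    ring
  rw [hcast]
  constructor
  · have := Nat.lt_floor_add_one (η * m)
    linarith
  · exact Nat.floor_le (by positivity)

lemma cFn_le (η : ℝ) (k : ℕ) : cFn η k ≤ k := Nat.sub_le _ _

lemma cFn_mono (η : ℝ) (hη0 : 0 ≤ η) (hη1 : η < 1) : ∀ k, cFn η k ≤ cFn η (k + 1)
    ∧ cFn η (k + 1) ≤ cFn η k + 1 := by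
  intro k
  have h1 : ⌊η * k⌋₊ ≤ ⌊η * (k+1)⌋₊ := Nat.floor_le_floor (by nlinarith [Nat.cast_nonneg (α := ℝ) k])
  have h2 : ⌊η * ((k : ℕ) + 1 : ℕ)⌋₊ ≤ ⌊η * k⌋₊ + 1 := by
    have : η * ((k : ℕ) + 1 : ℕ) ≤ η * k + 1 := by
      push_cast
      nlinarith
    calc ⌊η * ((k : ℕ) + 1 : ℕ)⌋₊ ≤ ⌊η * k + 1⌋₊ := Nat.floor_le_floor this
      _ = ⌊η * k⌋₊ + 1 := by
        rw [Nat.floor_add_one (by positivity)]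
  have h3 := cFn_floor_le η hη0 hη1 k
  have h4 := cFn_floor_le η hη0 hη1 (k + 1)
  unfold cFn
  push_cast at h1 h2 h3 h4 ⊢
  omega

lemma cFn_unbounded (η : ℝ) (hη0 : 0 ≤ η) (hη1 : η < 1) (n : ℕ) : ∃ k, n ≤ cFn η k := by
  obtain ⟨k, hk⟩ := exists_nat_gt ((n : ℝ) / (1 - η))
  refine ⟨k, ?_⟩
  have h1 : (n : ℝ) < (1 - η) * k := by
    rw [div_lt_iff₀ (by linarith)] at hk
    linarith
  have h2 : (cFn η k : ℝ) = (k : ℝ) - ⌊η * k⌋₊ := by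
    rw [cFn, Nat.cast_sub (cFn_floor_le η hη0 hη1 k)]
  have h3 : (⌊η * k⌋₊ : ℝ) ≤ η * k := Nat.floor_le (by positivity)
  have : (n : ℝ) ≤ (cFn η k : ℝ) := by
    rw [h2]
    nlinarith
  exact_mod_cast this

lemma cFn_surj (η : ℝ) (hη0 : 0 ≤ η) (hη1 : η < 1) (n : ℕ) : ∃ m, cFn η m = n ∧ n ≤ m := by
  have hex : ∃ k, n ≤ cFn η k := cFn_unbounded η hη0 hη1 n
  classical
  have hfind := Nat.find_spec hex
  set k0 := Nat.find hex with hk0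
  have heq : cFn η k0 = n := by
    rcases Nat.eq_zero_or_pos k0 with h0 | hpos
    · rw [h0] at hfind ⊢
      have : cFn η 0 = 0 := by simp [cFn]
      omega
    · have hprev : ¬ n ≤ cFn η (k0 - 1) := Nat.find_min hex (by omega)
      have hstep := (cFn_mono η hη0 hη1 (k0 - 1)).2
      have : k0 - 1 + 1 = k0 := by omega
      rw [this] at hstep
      omega
  exact ⟨k0, heq, heq ▸ cFn_le η k0⟩

/-! ### padding -/

open scoped Classical in
/-- Extend `t ≤ S` to a submultiset of `S` of size `n` (when `card t ≤ n ≤ card S`). -/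
noncomputable def padTo (S t : Multiset X) (n : ℕ) : Multiset X :=
  t + ((S - t).toList.take (n - Multiset.card t) : List X)

lemma padTo_le (S t : Multiset X) (n : ℕ) (ht : t ≤ S) : padTo S t n ≤ S := by
  classical
  have h1 : (((S - t).toList.take (n - Multiset.card t) : List X) : Multiset X) ≤ S - t := by
    have hsub := List.take_sublist (n - Multiset.card t) (S - t).toList
    calc (((S - t).toList.take (n - Multiset.card t) : List X) : Multiset X)
        ≤ ((S - t).toList : Multiset X) := hsub.subperm
      _ = S - t := Multiset.coe_toList _
  calc padTo S t n ≤ t + (S - t) := add_le_add_right h1 t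
    _ = S := by
      rw [add_comm]
      exact tsub_add_cancel_of_le ht

lemma padTo_card (S t : Multiset X) (n : ℕ) (ht : t ≤ S) (h1 : Multiset.card t ≤ n)
    (h2 : n ≤ Multiset.card S) : Multiset.card (padTo S t n) = n := by
  classical
  rw [padTo, Multiset.card_add, Multiset.coe_card, List.length_take,
    Multiset.length_toList, Multiset.card_sub ht]
  omega

/-! ### the adversary -/

section Adv

variable (w : X → ℝ≥0∞) (hw : ∀ x, w x ≤ 1) (c : ℕ → ℕ)

/-- The thinning adversary: thin with `w`, then adjust the sample size to `c |S|`. -/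
noncomputable def adv (S : Multiset X) : PMF (Multiset X) :=
  (thin w hw S).bind (fun t =>
    if c (Multiset.card S) ≤ Multiset.card t
    then dropIter (Multiset.card t - c (Multiset.card S)) t
    else PMF.pure (padTo S t (c (Multiset.card S))))

lemma adv_support (hc : ∀ k, c k ≤ k) (S T : Multiset X)
    (h : T ∈ (adv w hw c S).support) : T ≤ S ∧ Multiset.card T = c (Multiset.card S) := by
  rw [adv, PMF.mem_support_bind_iff] at h
  obtain ⟨t, ht, hT⟩ := h
  have hts : t ≤ S := thin_support w hw ht
  by_cases hcase : c (Multiset.card S) ≤ Multiset.card t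
  · rw [if_pos hcase] at hT
    obtain ⟨h1, h2⟩ := dropIter_support hT
    exact ⟨h1.trans hts, by omega⟩
  · rw [if_neg hcase, PMF.support_pure, Set.mem_singleton_iff] at hT
    subst hT
    have hcS : c (Multiset.card S) ≤ Multiset.card S := hc _
    exact ⟨padTo_le S t _ hts,
      padTo_card S t _ hts (by omega) hcS⟩

end Adv

end StmtAux
namespace StmtAux

variable {X : Type*}

section AdvBound

variable (p p' r : PMF X) (e1 e2 : ℝ≥0∞)

/-- Main distributional bound: the adversary's output is close to `iid p' n`. -/
lemma adv_pe_le (he : e1 + e2 = 1) (hdec : ∀ x, p x = e1 * p' x + e2 * r x)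
    (c : ℕ → ℕ) (m' n : ℕ) (hcm : c m' = n) (E : Set (Multiset X)) :
    probEvent ((iid p m').bind (adv (keepW p p' e1) (keepW_le_one p p' r e1 e2 hdec) c)) E
      ≤ probEvent (iid p' n) E
        + 2 * probEvent (Nb e1 (he1_le e1 e2 he) m') {k | k < n} := by
  classical
  set G : Multiset X → PMF (Multiset X) := fun t =>
    if n ≤ Multiset.card t then dropIter (Multiset.card t - n) t else PMF.pure t with hGdef
  set Bad : Set (Multiset X) := {t | Multiset.card t < n} with hBaddef
  set w := keepW p p' e1 with hwdef
  have hw : ∀ x, w x ≤ 1 := keepW_le_one p p' r e1 e2 hdec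
  have he1' : e1 ≤ 1 := he1_le e1 e2 he
  -- step 1: bound the per-sample adversary output
  have hb : ∀ S ∈ (iid p m').support,
      probEvent (adv w hw c S) E
        ≤ probEvent ((thin w hw S).bind G) E + probEvent (thin w hw S) Bad := by
    intro S hS
    have hcard : Multiset.card S = m' := iid_support_card p m' hS
    have hpt : ∀ t : Multiset X,
        probEvent (if c (Multiset.card S) ≤ Multiset.card t
          then dropIter (Multiset.card t - c (Multiset.card S)) t
          else PMF.pure (padTo S t (c (Multiset.card S)))) E
        ≤ probEvent (G t) E + Bad.indicator (fun _ => (1:ℝ≥0∞)) t := by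
      intro t
      rw [hcard, hcm]
      by_cases hle : n ≤ Multiset.card t
      · rw [if_pos hle, hGdef]
        simp only [if_pos hle]
        exact le_add_right le_rfl
      · rw [if_neg hle]
        have h1 : Bad.indicator (fun _ => (1:ℝ≥0∞)) t = 1 :=
          Set.indicator_of_mem (show t ∈ Bad from by simpa [hBaddef] using hle) _
        rw [h1]
        exact le_add_left (pe_le_one _ _)
    calc probEvent (adv w hw c S) E
        = ∑' t, (thin w hw S) t * probEvent (if c (Multiset.card S) ≤ Multiset.card t
            then dropIter (Multiset.card t - c (Multiset.card S)) t
            else PMF.pure (padTo S t (c (Multiset.card S)))) E := pe_bind _ _ _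
      _ ≤ ∑' t, (thin w hw S) t *
            (probEvent (G t) E + Bad.indicator (fun _ => (1:ℝ≥0∞)) t) :=
          ENNReal.tsum_le_tsum fun t => mul_le_mul_right (hpt t) _
      _ = (∑' t, (thin w hw S) t * probEvent (G t) E)
            + ∑' t, (thin w hw S) t * Bad.indicator (fun _ => (1:ℝ≥0∞)) t := by
          rw [← ENNReal.tsum_add]
          exact tsum_congr fun t => mul_add _ _ _
      _ = probEvent ((thin w hw S).bind G) E + probEvent (thin w hw S) Bad := by
          rw [pe_bind, pe_eq_tsum_mul]
  -- step 2: sum over S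
  have h2 : probEvent ((iid p m').bind (adv w hw c)) E
      ≤ probEvent (((iid p m').bind (thin w hw)).bind G) E
        + probEvent ((iid p m').bind (thin w hw)) Bad := by
    have ha : probEvent ((iid p m').bind (adv w hw c)) E
        = ∑' S, (iid p m') S * probEvent (adv w hw c S) E := pe_bind _ _ _
    have hbnd : probEvent (((iid p m').bind (thin w hw)).bind G) E
        = ∑' S, (iid p m') S * probEvent ((thin w hw S).bind G) E := by
      rw [PMF.bind_bind, pe_bind]
    have hc' : probEvent ((iid p m').bind (thin w hw)) Bad
        = ∑' S, (iid p m') S * probEvent (thin w hw S) Bad := pe_bind _ _ _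
    rw [ha, hbnd, hc', ← ENNReal.tsum_add]
    refine ENNReal.tsum_le_tsum fun S => ?_
    rw [← mul_add]
    by_cases hS : S ∈ (iid p m').support
    · exact mul_le_mul_right (hb S hS) _
    · simp only [PMF.mem_support_iff, not_not] at hS
      rw [hS, zero_mul, zero_mul]
  -- step 3: identify the thinned distribution
  have h3 : (iid p m').bind (thin w hw) = (Nb e1 (he1_le e1 e2 he) m').bind (fun k => iid p' k) := by
    have hh := iid_bind_thin p p' r e1 e2 he hdec m'
    calc (iid p m').bind (thin w hw) = thinIid p' e1 (he1_le e1 e2 he) m' := hh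
      _ = (Nb e1 (he1_le e1 e2 he) m').bind (fun k => iid p' k) :=
        thinIid_eq_mixture p' e1 (he1_le e1 e2 he) m'
  -- step 4: the G-processed mixture
  have h4 : probEvent (((Nb e1 (he1_le e1 e2 he) m').bind (fun k => iid p' k)).bind G) E
      ≤ probEvent (iid p' n) E + probEvent (Nb e1 (he1_le e1 e2 he) m') {k | k < n} := by
    rw [PMF.bind_bind, pe_bind]
    have hpt : ∀ k : ℕ, (Nb e1 (he1_le e1 e2 he) m') k * probEvent ((iid p' k).bind G) E
        ≤ (Nb e1 (he1_le e1 e2 he) m') k * probEvent (iid p' n) E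
          + (Nb e1 (he1_le e1 e2 he) m') k
            * ({k | k < n} : Set ℕ).indicator (fun _ => (1:ℝ≥0∞)) k := by
      intro k
      by_cases hk : n ≤ k
      · have hG : (iid p' k).bind G = iid p' n := by
          have hcongr : ∀ t ∈ (iid p' k).support, G t = dropIter (k - n) t := by
            intro t ht
            have hct : Multiset.card t = k := iid_support_card p' k ht
            rw [hGdef]
            simp only [hct, if_pos hk]
          rw [bind_congr' _ _ _ hcongr, iid_bind_dropIter p' k (k - n) (by omega)]
          congr 1
          omega
        rw [hG]
        exact le_add_right le_rfl
      · calc (Nb e1 (he1_le e1 e2 he) m') k * probEvent ((iid p' k).bind G) E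
            ≤ (Nb e1 (he1_le e1 e2 he) m') k * 1 := mul_le_mul_right (pe_le_one _ _) _
          _ = (Nb e1 (he1_le e1 e2 he) m') k
              * ({k | k < n} : Set ℕ).indicator (fun _ => (1:ℝ≥0∞)) k := by
              rw [Set.indicator_of_mem (show k ∈ {k | k < n} from show k < n by omega)]
          _ ≤ _ := le_add_left le_rfl
    calc ∑' k, (Nb e1 (he1_le e1 e2 he) m') k * probEvent ((iid p' k).bind G) E
        ≤ ∑' k, ((Nb e1 (he1_le e1 e2 he) m') k * probEvent (iid p' n) E
            + (Nb e1 (he1_le e1 e2 he) m') k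
              * ({k | k < n} : Set ℕ).indicator (fun _ => (1:ℝ≥0∞)) k) :=
          ENNReal.tsum_le_tsum hpt
      _ = (∑' k, (Nb e1 (he1_le e1 e2 he) m') k * probEvent (iid p' n) E)
          + ∑' k, (Nb e1 (he1_le e1 e2 he) m') k
              * ({k | k < n} : Set ℕ).indicator (fun _ => (1:ℝ≥0∞)) k :=
          ENNReal.tsum_add
      _ = probEvent (iid p' n) E + probEvent (Nb e1 (he1_le e1 e2 he) m') {k | k < n} := by
          rw [ENNReal.tsum_mul_right, (Nb e1 (he1_le e1 e2 he) m').tsum_coe, one_mul,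
            ← pe_eq_tsum_mul]
  -- step 5: the Bad event
  have h5 : probEvent ((Nb e1 (he1_le e1 e2 he) m').bind (fun k => iid p' k)) Bad
      ≤ probEvent (Nb e1 (he1_le e1 e2 he) m') {k | k < n} := by
    rw [pe_bind]
    have hpt : ∀ k : ℕ, (Nb e1 (he1_le e1 e2 he) m') k * probEvent (iid p' k) Bad
        ≤ (Nb e1 (he1_le e1 e2 he) m') k
            * ({k | k < n} : Set ℕ).indicator (fun _ => (1:ℝ≥0∞)) k := by
      intro k
      by_cases hk : k < n
      · rw [Set.indicator_of_mem (show k ∈ {k | k < n} from hk)]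
        exact mul_le_mul_right (pe_le_one _ _) _
      · have hz : probEvent (iid p' k) Bad = 0 := by
          rw [pe_def]
          refine (ENNReal.tsum_eq_zero).mpr fun t => ?_
          by_cases ht : t ∈ Bad
          · rw [Set.indicator_of_mem ht]
            by_contra h0
            have := iid_support_card p' k (show t ∈ (iid p' k).support from h0)
            rw [hBaddef] at ht
            simp only [Set.mem_setOf_eq] at ht
            omega
          · rw [Set.indicator_of_notMem ht]
        rw [hz, mul_zero]
        exact zero_le
    calc ∑' k, (Nb e1 (he1_le e1 e2 he) m') k * probEvent (iid p' k) Bad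
        ≤ ∑' k, (Nb e1 (he1_le e1 e2 he) m') k
            * ({k | k < n} : Set ℕ).indicator (fun _ => (1:ℝ≥0∞)) k :=
          ENNReal.tsum_le_tsum hpt
      _ = probEvent (Nb e1 (he1_le e1 e2 he) m') {k | k < n} := (pe_eq_tsum_mul _ _).symm
  calc probEvent ((iid p m').bind (adv w hw c)) E
      ≤ probEvent (((iid p m').bind (thin w hw)).bind G) E
        + probEvent ((iid p m').bind (thin w hw)) Bad := h2
    _ ≤ (probEvent (iid p' n) E + probEvent (Nb e1 (he1_le e1 e2 he) m') {k | k < n})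
        + probEvent (Nb e1 (he1_le e1 e2 he) m') {k | k < n} := by
        rw [h3]
        exact add_le_add h4 h5
    _ = probEvent (iid p' n) E
        + 2 * probEvent (Nb e1 (he1_le e1 e2 he) m') {k | k < n} := by
        rw [add_assoc, two_mul]

end AdvBound

end StmtAux
namespace StmtAux

variable {X : Type*} {β : Type*}

/-- If the learner is good with high probability under the internal randomization,
the mixture output is good. -/
lemma tv_bind_le (μ : PMF β) (A : β → PMF X) (p : PMF X) (b' ε4 : ℝ)
    (hb' : 0 ≤ b') (hε4 : 0 ≤ ε4)
    (hh : probEvent μ ({T | tv (A T) p ≤ b'}ᶜ) ≤ ENNReal.ofReal ε4) :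
    tv (μ.bind A) p ≤ b' + ε4 := by
  classical
  set E : Set β := {T | tv (A T) p ≤ b'} with hEdef
  have hpt : ∀ T : β, μ T * etv (A T) p
      ≤ μ T * ENNReal.ofReal (2 * b') + Eᶜ.indicator (⇑μ) T * 2 := by
    intro T
    by_cases hT : T ∈ E
    · have h1 : etv (A T) p ≤ ENNReal.ofReal (2 * b') := by
        rw [etv_eq_ofReal]
        exact ENNReal.ofReal_le_ofReal (by
          have : tv (A T) p ≤ b' := hT
          linarith)
      calc μ T * etv (A T) p ≤ μ T * ENNReal.ofReal (2 * b') := mul_le_mul_right h1 _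
        _ ≤ _ := le_add_right le_rfl
    · have h1 : Eᶜ.indicator (⇑μ) T = μ T := Set.indicator_of_mem (by simpa using hT) _
      calc μ T * etv (A T) p ≤ μ T * 2 := mul_le_mul_right (etv_le_two _ _) _
        _ = Eᶜ.indicator (⇑μ) T * 2 := by rw [h1]
        _ ≤ _ := le_add_left le_rfl
  have hbound : etv (μ.bind A) p ≤ ENNReal.ofReal (2 * b' + 2 * ε4) := by
    calc etv (μ.bind A) p ≤ ∑' T, μ T * etv (A T) p := etv_bind_le μ A p
      _ ≤ ∑' T, (μ T * ENNReal.ofReal (2 * b') + Eᶜ.indicator (⇑μ) T * 2) :=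
          ENNReal.tsum_le_tsum hpt
      _ = (∑' T, μ T * ENNReal.ofReal (2 * b')) + ∑' T, Eᶜ.indicator (⇑μ) T * 2 :=
          ENNReal.tsum_add
      _ = ENNReal.ofReal (2 * b') + probEvent μ Eᶜ * 2 := by
          rw [ENNReal.tsum_mul_right, μ.tsum_coe, one_mul, ENNReal.tsum_mul_right, ← pe_def]
      _ ≤ ENNReal.ofReal (2 * b') + ENNReal.ofReal ε4 * 2 :=
          add_le_add_right (mul_le_mul_left hh _) _
      _ = ENNReal.ofReal (2 * b' + 2 * ε4) := by
          rw [ENNReal.ofReal_add (by linarith) (by linarith)]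
          congr 1
          rw [show (2:ℝ≥0∞) = ENNReal.ofReal 2 by norm_num]
          rw [← ENNReal.ofReal_mul hε4]
          congr 1
          ring
  rw [tv_eq_etv]
  have htr := ENNReal.toReal_mono ENNReal.ofReal_ne_top hbound
  rw [ENNReal.toReal_ofReal (by linarith)] at htr
  linarith

end StmtAux
namespace StmtAux

set_option maxHeartbeats 1600000 in
lemma gt_to_obl {X : Type*} (C : Set (PMF X)) (α : ℝ) (hα : 1 ≤ α)
    (hGT : GTAwareSubtractivelyRobustlyLearnable C α) :
    ObliviouslySubtractivelyRobustlyLearnable C α := by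
  classical
  obtain ⟨A, mc, hA⟩ := hGT
  refine ⟨fun S => (dropIter (Multiset.card S - (Multiset.card S / 2 + 1)) S).bind A,
    fun ε δ => 2 * (mc (ε/4) (δ*ε/16) + ⌈64*α^2/(ε^3*δ)⌉₊) + 4, ?_⟩
  intro p hp η hη0 hη1 p' r hdec ε δ hε0 hε1 hδ0 hδ1 m hm
  have hα0 : (0:ℝ) < α := by linarith
  set θ : ℝ := ε/(2*α) with hθdef
  have hθ0 : 0 < θ := by positivity
  have hαθ : α * θ = ε/2 := by
    rw [hθdef]
    field_simp
  by_cases hcase : η ≤ 1 - θ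
  swap
  · -- trivial regime: the bound exceeds 1
    push_neg at hcase
    have hone : ∀ S : Multiset X,
        tv ((dropIter (Multiset.card S - (Multiset.card S / 2 + 1)) S).bind A) p
          ≤ α * η + ε := by
      intro S
      refine (tv_le_one _ _).trans ?_
      nlinarith [mul_lt_mul_of_pos_left hcase hα0]
    have hpe : probEvent (iid p' m)
        {S | tv ((dropIter (Multiset.card S - (Multiset.card S / 2 + 1)) S).bind A) p
          ≤ α * η + ε} = 1 :=
      pe_of_support_subset _ _ (fun S _ => hone S)
    rw [hpe]
    exact tsub_le_self
  · -- main regime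
    set η'' : ℝ := η + θ/2 with hη''def
    have hη''0 : 0 < η'' := by rw [hη''def]; linarith
    have hη''1 : η'' < 1 := by rw [hη''def]; linarith
    have hαη'' : α * η'' = α * η + ε/4 := by
      have h1 : α * η'' = α * η + (α * θ)/2 := by rw [hη''def]; ring
      rw [h1, hαθ]
      ring
    set e1 : ℝ≥0∞ := ENNReal.ofReal (1 - η) with he1def
    set e2 : ℝ≥0∞ := ENNReal.ofReal η with he2def
    have he : e1 + e2 = 1 := by
      rw [he1def, he2def, ← ENNReal.ofReal_add (by linarith) hη0]
      norm_num
    have hdec' : ∀ x, p x = e1 * p' x + e2 * r x := hdec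
    -- sample sizes
    set mcv : ℕ := mc (ε/4) (δ*ε/16) with hmcvdef
    set clv : ℕ := ⌈64*α^2/(ε^3*δ)⌉₊ with hclvdef
    set n : ℕ := m / 2 + 1 with hndef
    have hmge : 2 * (mcv + clv) + 4 ≤ m := hm
    have hn_mc : mcv ≤ n := by omega
    have hn_cl : clv + 1 ≤ n := by omega
    have hnm : n ≤ m := by omega
    obtain ⟨m', hcm', hnm'⟩ := cFn_surj η'' (le_of_lt hη''0) hη''1 n
    -- the adversary
    set V : Multiset X → PMF X → PMF (Multiset X) := fun S _ =>
      adv (keepW p p' e1) (keepW_le_one p p' r e1 e2 hdec') (cFn η'') S with hVdef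
    have hVsub : GTSubtractive V := fun S q T hT =>
      (adv_support _ _ _ (fun k => cFn_le η'' k) S T hT).1
    have hVbud : GTFixedBudgetSub V η'' :=
      ⟨cFn η'', fun S q T hT => (adv_support _ _ _ (fun k => cFn_le η'' k) S T hT).2,
        fun m0 => cFn_budget η'' (le_of_lt hη''0) hη''1 m0⟩
    have hd0 : 0 < δ*ε/16 := by positivity
    have hd1 : δ*ε/16 < 1 := by nlinarith
    have hm'mc : mc (ε/4) (δ*ε/16) ≤ m' := by omega
    have happly := hA V hVsub η'' hη''0 hη''1 hVbud p hp (ε/4) (δ*ε/16)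
      (by linarith) (by linarith) hd0 hd1 m' hm'mc
    set Egood : Set (Multiset X) := {T | tv (A T) p ≤ α * η'' + ε/4} with hEdef
    have hadv : probEvent ((iid p m').bind fun S => V S p) Egood
        ≤ probEvent (iid p' n) Egood
          + 2 * probEvent (Nb e1 (he1_le e1 e2 he) m') {k | k < n} :=
      adv_pe_le p p' r e1 e2 he hdec' (cFn η'') m' n hcm' Egood
    -- tail bound
    have hm'1 : 1 ≤ m' := le_trans (by omega) hnm'
    have hm'pos : (0:ℝ) < m' := by exact_mod_cast hm'1
    have hm'big : 64*α^2/(ε^3*δ) ≤ (m' : ℝ) := by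
      calc 64*α^2/(ε^3*δ) ≤ (clv : ℝ) := Nat.le_ceil _
        _ ≤ (m' : ℝ) := by exact_mod_cast le_trans (by omega) hnm'
    set a : ℝ := (θ/2) * (m' : ℝ) with hadef
    have ha : 0 < a := by positivity
    have hbad : ∀ k : ℕ, k < n → (k : ℝ) ≤ (1 - η) * m' - a := by
      intro k hk
      have hfl1 : (⌊η'' * m'⌋₊ : ℝ) ≤ η'' * m' := Nat.floor_le (by positivity)
      have hfl2 : η'' * m' < (⌊η'' * m'⌋₊ : ℝ) + 1 := Nat.lt_floor_add_one _
      have hncast : (n : ℝ) = (m' : ℝ) - (⌊η'' * m'⌋₊ : ℝ) := by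
        rw [← hcm', cFn, Nat.cast_sub (cFn_floor_le η'' (le_of_lt hη''0) hη''1 m')]
      have hkn : (k : ℝ) ≤ (n : ℝ) - 1 := by
        have : (k : ℝ) + 1 ≤ n := by exact_mod_cast hk
        linarith
      rw [hadef]
      rw [hη''def] at hfl2
      nlinarith [hfl2, hkn, hncast]
    have htail : probEvent (Nb e1 (he1_le e1 e2 he) m') {k | k < n}
        ≤ ENNReal.ofReal (δ*ε/16) := by
      have h1 := Nb_tail (1 - η) (by linarith) (by linarith) (he1_le e1 e2 he)
        m' n a ha hbad
      refine le_trans h1 (ENNReal.ofReal_le_ofReal ?_)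
      -- (m':ℝ)/(4*a^2) ≤ δ*ε/16
      have hkey : (m' : ℝ)/(4*a^2) = 1/(θ^2 * m') := by
        rw [hadef]
        field_simp
        ring
      rw [hkey]
      rw [div_le_div_iff₀ (by positivity) (by norm_num)]
      have hθsq : θ^2 * (m':ℝ) = ε^2 * m' / (4*α^2) := by
        rw [hθdef]
        field_simp
        ring
      have h16 : (δ*ε/16) * (ε^2/(4*α^2) * (64*α^2/(ε^3*δ))) = 1 := by
        field_simp
        ring
      have hmono : (δ*ε/16) * (ε^2/(4*α^2) * (64*α^2/(ε^3*δ)))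
          ≤ (δ*ε/16) * (ε^2/(4*α^2) * (m':ℝ)) := by
        refine mul_le_mul_of_nonneg_left (mul_le_mul_of_nonneg_left hm'big ?_) ?_
        · positivity
        · positivity
      rw [h16] at hmono
      calc (1:ℝ) * 16 = 16 * 1 := by ring
        _ ≤ 16 * ((δ*ε/16) * (ε^2/(4*α^2) * (m':ℝ))) := by nlinarith [hmono]
        _ = δ*ε/16 * (16 * (θ^2 * m')) := by rw [hθsq]; ring
        _ = δ*ε * (θ^2 * m') := by ring
    -- bad-event probability under iid p' n
    have hofd1 : ENNReal.ofReal (δ*ε/16) ≤ 1 := ENNReal.ofReal_le_one.mpr (by linarith)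
    have hEbad : probEvent (iid p' n) Egoodᶜ
        ≤ ENNReal.ofReal (δ*ε/16) + 2 * ENNReal.ofReal (δ*ε/16) := by
      rw [pe_compl, tsub_le_iff_right]
      calc (1:ℝ≥0∞) = (1 - ENNReal.ofReal (δ*ε/16)) + ENNReal.ofReal (δ*ε/16) :=
            (tsub_add_cancel_of_le hofd1).symm
        _ ≤ probEvent ((iid p m').bind fun S => V S p) Egood + ENNReal.ofReal (δ*ε/16) :=
            add_le_add_left happly _
        _ ≤ (probEvent (iid p' n) Egood
              + 2 * probEvent (Nb e1 (he1_le e1 e2 he) m') {k | k < n})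
              + ENNReal.ofReal (δ*ε/16) := add_le_add_left hadv _
        _ ≤ (probEvent (iid p' n) Egood + 2 * ENNReal.ofReal (δ*ε/16))
              + ENNReal.ofReal (δ*ε/16) := by
            refine add_le_add_left (add_le_add_right (mul_le_mul_right htail _) _) _
        _ = ENNReal.ofReal (δ*ε/16) + 2 * ENNReal.ofReal (δ*ε/16)
              + probEvent (iid p' n) Egood := by ring
    have h3d : ENNReal.ofReal (δ*ε/16) + 2 * ENNReal.ofReal (δ*ε/16)
        = ENNReal.ofReal (3*(δ*ε/16)) := by
      rw [two_mul, ← add_assoc, ← ENNReal.ofReal_add (by linarith) (by linarith),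
        ← ENNReal.ofReal_add (by linarith) (by linarith)]
      congr 1
      ring
    -- the learner-side randomization
    set h : Multiset X → ℝ≥0∞ := fun S =>
      probEvent (dropIter (Multiset.card S - (Multiset.card S / 2 + 1)) S) Egoodᶜ with hhdef
    have hEh : ∑' S, (iid p' m) S * h S = probEvent (iid p' n) Egoodᶜ := by
      rw [show ∑' S, (iid p' m) S * h S
          = probEvent ((iid p' m).bind (fun S =>
              dropIter (Multiset.card S - (Multiset.card S / 2 + 1)) S)) Egoodᶜ from
        (pe_bind _ _ _).symm]
      congr 1
      have hcongr : ∀ S ∈ (iid p' m).support,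
          dropIter (Multiset.card S - (Multiset.card S / 2 + 1)) S
            = dropIter (m - n) S := by
        intro S hS
        rw [iid_support_card p' m hS, hndef]
      rw [bind_congr' _ _ _ hcongr, iid_bind_dropIter p' m (m - n) (by omega)]
      congr 1
      omega
    have hmark : probEvent (iid p' m) {S | ENNReal.ofReal (ε/4) ≤ h S}
        ≤ ENNReal.ofReal δ := by
      have h1 := markov (iid p' m) h (ENNReal.ofReal (ε/4))
      rw [hEh] at h1
      have h2 : probEvent (iid p' m) {S | ENNReal.ofReal (ε/4) ≤ h S}
          ≤ probEvent (iid p' n) Egoodᶜ / ENNReal.ofReal (ε/4) := by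
        rw [ENNReal.le_div_iff_mul_le
          (Or.inl (ENNReal.ofReal_pos.mpr (by linarith)).ne')
          (Or.inl ENNReal.ofReal_ne_top)]
        rw [mul_comm]
        exact h1
      refine h2.trans ?_
      calc probEvent (iid p' n) Egoodᶜ / ENNReal.ofReal (ε/4)
          ≤ ENNReal.ofReal (3*(δ*ε/16)) / ENNReal.ofReal (ε/4) := by
            rw [← h3d]
            exact ENNReal.div_le_div_right hEbad _
        _ = ENNReal.ofReal ((3*(δ*ε/16)) / (ε/4)) :=
            (ENNReal.ofReal_div_of_pos (by linarith)).symm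
        _ ≤ ENNReal.ofReal δ := by
            refine ENNReal.ofReal_le_ofReal ?_
            rw [div_le_iff₀ (by linarith : (0:ℝ) < ε/4)]
            nlinarith
    -- conclude
    have hincl : {S | ENNReal.ofReal (ε/4) ≤ h S}ᶜ
        ⊆ {S : Multiset X |
            tv ((dropIter (Multiset.card S - (Multiset.card S / 2 + 1)) S).bind A) p
              ≤ α * η + ε} := by
      intro S hS
      simp only [Set.mem_compl_iff, Set.mem_setOf_eq, not_le] at hS
      have hhS : h S ≤ ENNReal.ofReal (ε/4) := le_of_lt hS
      have hb'0 : 0 ≤ α * η'' + ε/4 := by nlinarith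
      have := tv_bind_le (dropIter (Multiset.card S - (Multiset.card S / 2 + 1)) S) A p
        (α * η'' + ε/4) (ε/4) hb'0 (by linarith) hhS
      simp only [Set.mem_setOf_eq]
      rw [hαη''] at this
      linarith
    calc 1 - ENNReal.ofReal δ
        ≤ 1 - probEvent (iid p' m) {S | ENNReal.ofReal (ε/4) ≤ h S} :=
          tsub_le_tsub_left hmark 1
      _ = probEvent (iid p' m) {S | ENNReal.ofReal (ε/4) ≤ h S}ᶜ := (pe_compl _ _).symm
      _ ≤ _ := pe_mono _ hincl

end StmtAux


/-- If `C` is not obliviously subtractively α-robustly learnable, then `C`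
is also not adaptively subtractively α-robustly learnable with respect to ground-truth-aware
subtractive adaptive adversaries. -/
theorem stmt16 {X : Type*} [Countable X] (C : Set (PMF X)) (α : ℝ) (hα : 1 ≤ α)
    (h : ¬ ObliviouslySubtractivelyRobustlyLearnable C α) :
    ¬ GTAwareSubtractivelyRobustlyLearnable C α :=
  fun hGT => h (StmtAux.gt_to_obl C α hα hGT)
end StmtAux
end

section
/- Let j,k ∈ ℕ with 1 ≤ j < k, let n ≥ 1, and let i, i' be indices of finite sets with B_{i'} ⊆ B_i, |B_{i'}| = 2^n, and |B_i| = 2^{2^n}. Then d_TV(p_{i,j,k}, p_{i',j,k}) ≥ (1/2)·(1/j − 1/k). -/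
open scoped ENNReal NNReal

/-- If `B_{i'} ⊆ B_i`, `|B_{i'}| = 2^n` and `|B_i| = 2^{2^n}` (with
`n ≥ 1`, `1 ≤ j < k`), then `d_TV(p_{i,j,k}, p_{i',j,k}) ≥ (1/2)(1/j − 1/k)`. -/
theorem stmt17 (B : ℕ → Finset ℕ) (i i' j k n : ℕ)
    (hj : 1 ≤ j) (hjk : j < k) (hn : 1 ≤ n)
    (hsub : B i' ⊆ B i) (hci' : (B i').card = 2 ^ n) (hci : (B i).card = 2 ^ 2 ^ n)
    (p q : PMF (ℕ × ℕ)) (hp : IsPijk B i j k p) (hq : IsPijk B i' j k q) :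
    (1 / 2) * (1 / (j : ℝ) - 1 / (k : ℝ)) ≤ tv p q := by
  have hj0 : (j : ℕ) ≠ 0 := by omega
  have hjE : ((j : ℝ≥0∞)) ≠ 0 := by exact_mod_cast Nat.cast_ne_zero.mpr hj0
  have hjT : ((j : ℝ≥0∞))⁻¹ ≠ ⊤ := ENNReal.inv_ne_top.mpr hjE
  have hle : ((k : ℝ≥0∞))⁻¹ ≤ ((j : ℝ≥0∞))⁻¹ := by
    rw [ENNReal.inv_le_inv]; exact_mod_cast hjk.le
  set c : ℝ := (j : ℝ)⁻¹ - (k : ℝ)⁻¹ with hcdef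
  have hcpos : 0 < c := by
    have : (k : ℝ)⁻¹ < (j : ℝ)⁻¹ := by
      apply inv_strictAnti₀
      · exact_mod_cast Nat.pos_of_ne_zero hj0
      · exact_mod_cast hjk
    simpa [hcdef] using sub_pos.mpr this
  have hsubR : (((j : ℝ≥0∞))⁻¹ - ((k : ℝ≥0∞))⁻¹).toReal = c := by
    rw [ENNReal.toReal_sub_of_le hle hjT, ENNReal.toReal_inv, ENNReal.toReal_inv]
    simp [hcdef]
  have h2le : (2 : ℝ) ^ n ≤ (2 : ℝ) ^ 2 ^ n :=
    pow_le_pow_right₀ (by norm_num) (Nat.lt_two_pow_self (n := n)).le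
  have hval : ∀ b ∈ B i, (p (b, 2 * j + 1)).toReal = c * ((2 : ℝ) ^ 2 ^ n)⁻¹ := by
    intro b hb
    have h1 : ((b, 2 * j + 1) : ℕ × ℕ) ≠ (0, 0) := by
      intro h; simp [Prod.ext_iff] at h
    have h2 : ((b, 2 * j + 1) : ℕ × ℕ) ≠ (i, 2 * j + 2) := by
      intro h; simp [Prod.ext_iff] at h
    rw [hp (b, 2 * j + 1), if_neg h1, if_neg h2,
      if_pos (show (b, 2 * j + 1).1 ∈ B i ∧ (b, 2 * j + 1).2 = 2 * j + 1 from ⟨hb, rfl⟩),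
      mul_zero, mul_zero, zero_add, add_zero, ENNReal.toReal_mul, hsubR,
      ENNReal.toReal_inv, hci]
    push_cast
    norm_num
  have hvalq : ∀ b : ℕ, (q (b, 2 * j + 1)).toReal =
      if b ∈ B i' then c * ((2 : ℝ) ^ n)⁻¹ else 0 := by
    intro b
    have h1 : ((b, 2 * j + 1) : ℕ × ℕ) ≠ (0, 0) := by
      intro h; simp [Prod.ext_iff] at h
    have h2 : ((b, 2 * j + 1) : ℕ × ℕ) ≠ (i', 2 * j + 2) := by
      intro h; simp [Prod.ext_iff] at h
    rw [hq (b, 2 * j + 1), if_neg h1, if_neg h2, mul_zero, mul_zero, zero_add, add_zero]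
    by_cases hb : b ∈ B i'
    · rw [if_pos hb,
        if_pos (show (b, 2 * j + 1).1 ∈ B i' ∧ (b, 2 * j + 1).2 = 2 * j + 1 from ⟨hb, rfl⟩),
        ENNReal.toReal_mul, hsubR, ENNReal.toReal_inv, hci']
      push_cast
      norm_num
    · rw [if_neg hb, if_neg (by simp [hb])]
      simp
  have hsp : Summable fun x : ℕ × ℕ => (p x).toReal :=
    ENNReal.summable_toReal (by rw [p.tsum_coe]; exact ENNReal.one_ne_top)
  have hsq : Summable fun x : ℕ × ℕ => (q x).toReal :=
    ENNReal.summable_toReal (by rw [q.tsum_coe]; exact ENNReal.one_ne_top)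
  have hsd : Summable fun x : ℕ × ℕ => |(p x).toReal - (q x).toReal| := (hsp.sub hsq).abs
  set F : Finset (ℕ × ℕ) := (B i).image (fun b => (b, 2 * j + 1)) with hF
  have hFsum : ∑ x ∈ F, |(p x).toReal - (q x).toReal|
      = ∑ b ∈ B i, |(p (b, 2 * j + 1)).toReal - (q (b, 2 * j + 1)).toReal| := by
    rw [hF, Finset.sum_image]
    intro a _ b _ h
    simpa using h
  have hstep : ∑ b ∈ B i, |(p (b, 2 * j + 1)).toReal - (q (b, 2 * j + 1)).toReal|
      = 2 * c * (1 - (2 : ℝ) ^ n / (2 : ℝ) ^ 2 ^ n) := by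
    have hsplit : B i' ∪ (B i \ B i') = B i := Finset.union_sdiff_of_subset hsub
    rw [← hsplit, Finset.sum_union (Finset.disjoint_sdiff)]
    have v1 : ∀ b ∈ B i', |(p (b, 2 * j + 1)).toReal - (q (b, 2 * j + 1)).toReal|
        = c * ((2 : ℝ) ^ n)⁻¹ - c * ((2 : ℝ) ^ 2 ^ n)⁻¹ := by
      intro b hb
      rw [hval b (hsub hb), hvalq b, if_pos hb]
      rw [abs_of_nonpos, neg_sub]
      have : c * ((2 : ℝ) ^ 2 ^ n)⁻¹ ≤ c * ((2 : ℝ) ^ n)⁻¹ :=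
        mul_le_mul_of_nonneg_left (inv_anti₀ (by positivity) h2le) hcpos.le
      linarith
    have v2 : ∀ b ∈ B i \ B i', |(p (b, 2 * j + 1)).toReal - (q (b, 2 * j + 1)).toReal|
        = c * ((2 : ℝ) ^ 2 ^ n)⁻¹ := by
      intro b hb
      rw [hval b (Finset.mem_sdiff.mp hb).1, hvalq b,
        if_neg (Finset.mem_sdiff.mp hb).2, sub_zero, abs_of_nonneg (by positivity)]
    rw [Finset.sum_congr rfl v1, Finset.sum_congr rfl v2, Finset.sum_const, Finset.sum_const,
      Finset.card_sdiff_of_subset hsub, hci, hci', nsmul_eq_mul, nsmul_eq_mul]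
    have hNle : (2 : ℕ) ^ n ≤ 2 ^ 2 ^ n :=
      Nat.pow_le_pow_right (by norm_num) (Nat.lt_two_pow_self (n := n)).le
    push_cast [Nat.cast_sub hNle]
    have h20 : ((2 : ℝ) ^ n) ≠ 0 := by positivity
    have h20' : ((2 : ℝ) ^ 2 ^ n) ≠ 0 := by positivity
    field_simp
    ring
  have hfrac : (2 : ℝ) ^ n / (2 : ℝ) ^ 2 ^ n ≤ 1 / 2 := by
    rw [div_le_div_iff₀ (by positivity) (by norm_num)]
    have h2 : (2 : ℝ) ^ (n + 1) ≤ (2 : ℝ) ^ 2 ^ n := by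
      apply pow_le_pow_right₀ (by norm_num)
      have := Nat.lt_two_pow_self (n := n)
      omega
    calc (2 : ℝ) ^ n * 2 = (2 : ℝ) ^ (n + 1) := by ring
    _ ≤ (2 : ℝ) ^ 2 ^ n := h2
    _ = 1 * (2 : ℝ) ^ 2 ^ n := by ring
  have hlow : c ≤ ∑ x ∈ F, |(p x).toReal - (q x).toReal| := by
    rw [hFsum, hstep]
    nlinarith [mul_le_mul_of_nonneg_left hfrac hcpos.le]
  have hts : ∑ x ∈ F, |(p x).toReal - (q x).toReal|
      ≤ ∑' x, |(p x).toReal - (q x).toReal| :=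
    Summable.sum_le_tsum F (fun x _ => abs_nonneg _) hsd
  rw [tv]
  have hcc : (1 / (j : ℝ) - 1 / (k : ℝ)) = c := by rw [hcdef]; ring
  rw [hcc]
  have h := hlow.trans hts
  calc (1 / 2) * c = c / 2 := by ring
  _ ≤ (∑' x, |(p x).toReal - (q x).toReal|) / 2 := by
      gcongr
end
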